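/- arXiv:1611.07199 — 7 statements merged into one kernel-verified Lean document; each statement's English description precedes it below -/
import Mathlib

section
/- Grothendieck's lemma: a subset W of a Banach space X is relatively weakly compact if and only if for every ε > 0 there exists a relatively weakly compact set W_ε ⊆ X such that W ⊆ W_ε + ε B_X. -/
open MeasureTheory Filter Set ENNReal Pointwise

noncomputable section

/-- A subset of a normed space is *weakly compact* if its image in the weak space is compact. -/
def IsWeaklyCompact {X : Type*} [NormedAddCommGroup X] [NormedSpace ℝ X] (W : Set X) : Prop :=
  IsCompact (toWeakSpace ℝ X '' W)

/-- A subset is *relatively weakly compact* if its closure in the weak topology is compact. -/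
def IsRelWeaklyCompact {X : Type*} [NormedAddCommGroup X] [NormedSpace ℝ X] (W : Set X) : Prop :=
  IsCompact (closure (toWeakSpace ℝ X '' W))

namespace GrothendieckAux

variable {X : Type*} [NormedAddCommGroup X] [NormedSpace ℝ X]

/-- The canonical map from `X` to the weak-* dual of its dual. -/
def e (x : X) : WeakDual ℝ (StrongDual ℝ X) :=
  NormedSpace.inclusionInDoubleDual ℝ X x

lemma norm_e (x : X) : ‖WeakDual.toStrongDual (e x)‖ = ‖x‖ :=
  (NormedSpace.inclusionInDoubleDualLi ℝ (E := X)).norm_map x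

lemma isometry_e : Isometry (fun x : X => WeakDual.toStrongDual (e x)) :=
  (NormedSpace.inclusionInDoubleDualLi ℝ (E := X)).isometry

lemma e_add (a b : X) : e (a + b) = e a + e b :=
  map_add (NormedSpace.inclusionInDoubleDual ℝ X) a b

/-- The same map, regarded as defined on the weak space. -/
def eW (x : WeakSpace ℝ X) : WeakDual ℝ (StrongDual ℝ X) :=
  e ((toWeakSpace ℝ X).symm x)

lemma continuous_e : Continuous (eW (X := X)) := by
  apply WeakBilin.continuous_of_continuous_eval
  intro f
  exact WeakBilin.eval_continuous _ f

lemma isEmbedding_e : Topology.IsEmbedding (eW (X := X)) := by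
  have hBinj : Function.Injective ((topDualPairing ℝ X).flip) := by
    intro a b hab
    rw [NormedSpace.eq_iff_forall_dual_eq ℝ]
    intro g
    exact DFunLike.congr_fun hab g
  have hcomp : Topology.IsEmbedding
      ((fun φ : WeakDual ℝ (StrongDual ℝ X) => (φ : StrongDual ℝ X → ℝ)) ∘
        eW (X := X)) :=
    WeakBilin.isEmbedding (B := (topDualPairing ℝ X).flip) hBinj
  exact Topology.IsEmbedding.of_comp continuous_e (WeakBilin.coeFn_continuous _) hcomp

lemma image_e (W : Set X) :
    eW '' (toWeakSpace ℝ X '' W) = e '' W := by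
  rw [Set.image_image]; rfl

/-- Characterization of relative weak compactness via the bidual. -/
lemma relWeaklyCompact_iff (W : Set X) :
    IsRelWeaklyCompact W ↔
      IsCompact (closure (e '' W)) ∧ closure (e '' W) ⊆ Set.range (e (X := X)) := by
  constructor
  · intro hc
    have h1 : IsCompact (eW '' closure (toWeakSpace ℝ X '' W)) :=
      hc.image continuous_e
    have h2 : closure (e '' W) ⊆
        eW '' closure (toWeakSpace ℝ X '' W) := by
      apply closure_minimal _ h1.isClosed
      rw [← image_e]
      exact Set.image_mono subset_closure
    refine ⟨h1.of_isClosed_subset isClosed_closure h2, h2.trans ?_⟩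
    rintro _ ⟨x, -, rfl⟩
    exact ⟨(toWeakSpace ℝ X).symm x, rfl⟩
  · rintro ⟨hK, hsub⟩
    have hcl : closure (toWeakSpace ℝ X '' W) =
        eW ⁻¹' closure (e '' W) := by
      rw [isEmbedding_e.closure_eq_preimage_closure_image, image_e]
    have hrange : Set.range (eW (X := X)) = Set.range (e (X := X)) := by
      ext φ
      constructor
      · rintro ⟨x, rfl⟩; exact ⟨(toWeakSpace ℝ X).symm x, rfl⟩
      · rintro ⟨x, rfl⟩; exact ⟨toWeakSpace ℝ X x, rfl⟩
    show IsCompact (closure (toWeakSpace ℝ X '' W))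
    rw [hcl, isEmbedding_e.isCompact_iff,
      Set.image_preimage_eq_of_subset (by rw [hrange]; exact hsub)]
    exact hK

end GrothendieckAux

open GrothendieckAux in
/-- Grothendieck's lemma: a subset `W` of a Banach space `X` is relatively weakly compact
iff for every `ε > 0` there is a relatively weakly compact set `Wε` with `W ⊆ Wε + ε B_X`. -/
theorem grothendieck_lemma {X : Type*} [NormedAddCommGroup X] [NormedSpace ℝ X]
    [CompleteSpace X] (W : Set X) :
    IsRelWeaklyCompact W ↔ ∀ ε : ℝ, 0 < ε → ∃ Wε : Set X,
      IsRelWeaklyCompact Wε ∧ W ⊆ Wε + Metric.closedBall (0 : X) ε := by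
  constructor
  · intro hW ε hε
    refine ⟨W, hW, fun x hx => ?_⟩
    have h0 : (0 : X) ∈ Metric.closedBall (0 : X) ε := by
      simp [hε.le]
    simpa using Set.add_mem_add hx h0
  · intro h
    rw [relWeaklyCompact_iff]
    -- For each `ε > 0`, a weak-* compact set `K ⊆ range e` with `e '' W ⊆ K + ε-ball`.
    have key : ∀ ε : ℝ, 0 < ε → ∃ K : Set (WeakDual ℝ (StrongDual ℝ X)),
        IsCompact K ∧ K ⊆ Set.range (e (X := X)) ∧
        e '' W ⊆ K + WeakDual.toStrongDual ⁻¹' Metric.closedBall (0 : StrongDual ℝ (StrongDual ℝ X)) ε := by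
      intro ε hε
      obtain ⟨Wε, hWε, hsub⟩ := h ε hε
      obtain ⟨hKc, hKr⟩ := (relWeaklyCompact_iff Wε).mp hWε
      refine ⟨closure (e '' Wε), hKc, hKr, ?_⟩
      rintro _ ⟨w, hw, rfl⟩
      obtain ⟨a, ha, b, hb, rfl⟩ := hsub hw
      rw [e_add]
      refine Set.add_mem_add (subset_closure ⟨a, ha, rfl⟩) ?_
      simp only [Set.mem_preimage, Metric.mem_closedBall, dist_zero_right, norm_e]
      exact (dist_zero_right (WeakDual.toStrongDual (e b))).trans_le (by rw [norm_e]; simpa using hb)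
    have hball : ∀ ε : ℝ, IsCompact
        (WeakDual.toStrongDual ⁻¹' Metric.closedBall (0 : StrongDual ℝ
          (StrongDual ℝ X)) ε) := fun ε => WeakDual.isCompact_closedBall 0 ε
    obtain ⟨K₁, hK₁c, hK₁r, hW1⟩ := key 1 one_pos
    have hKB : IsCompact (K₁ + WeakDual.toStrongDual ⁻¹' Metric.closedBall (0 : StrongDual ℝ (StrongDual ℝ X)) 1) :=
      hK₁c.add (hball 1)
    have hWc : IsCompact (closure (e '' W)) :=
      hKB.of_isClosed_subset isClosed_closure (closure_minimal hW1 hKB.isClosed)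
    refine ⟨hWc, fun φ hφ => ?_⟩
    -- Show `toNormedDual φ` is in the (norm-closed) range of the bidual embedding.
    have hdist : ∀ ε : ℝ, 0 < ε → ∃ x : X,
        dist (WeakDual.toStrongDual φ) (WeakDual.toStrongDual (e x)) ≤ ε := by
      intro ε hε
      obtain ⟨K, hKc, hKr, hWK⟩ := key ε hε
      have hKBε : IsCompact (K + WeakDual.toStrongDual ⁻¹' Metric.closedBall (0 : StrongDual ℝ (StrongDual ℝ X)) ε) :=
        hKc.add (hball ε)
      have hcl := closure_minimal hWK hKBε.isClosed
      obtain ⟨ψ, hψ, b, hb, hφeq⟩ := hcl hφ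
      obtain ⟨x, rfl⟩ := hKr hψ
      refine ⟨x, ?_⟩
      have : WeakDual.toStrongDual φ - WeakDual.toStrongDual (e x) =
          WeakDual.toStrongDual b := by
        rw [← hφeq, map_add]; abel
      exact (dist_eq_norm (WeakDual.toStrongDual φ) (WeakDual.toStrongDual (e x))).trans_le (by rw [this]; exact (dist_zero_right (WeakDual.toStrongDual b)).symm.trans_le hb)
    have hclosed : IsClosed (Set.range fun x : X => WeakDual.toStrongDual (e x)) :=
      isometry_e.isClosedEmbedding.isClosed_range
    have hmem : WeakDual.toStrongDual φ ∈
        Set.range fun x : X => WeakDual.toStrongDual (e x) := by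
      rw [← hclosed.closure_eq]
      refine (Metric.mem_closure_iff (a := WeakDual.toStrongDual φ)
        (s := Set.range fun x : X => WeakDual.toStrongDual (e x))).mpr ?_
      intro ε hε
      obtain ⟨x, hx⟩ := hdist (ε / 2) (half_pos hε)
      exact ⟨_, ⟨x, rfl⟩, hx.trans_lt (half_lt_self hε)⟩
    obtain ⟨x, hx⟩ := hmem
    exact ⟨x, WeakDual.toStrongDual.injective hx⟩
end
end

section
/- Let (Ω,Σ,μ) be a probability space, X a Banach space, and K ⊆ L¹(μ,X). Then K is a δS-set if and only if K is uniformly integrable and for every δ > 0 and every ε > 0 there exists a weakly compact set W ⊆ X such that μ(f⁻¹(W + ε B_X)) ≥ 1 − δ for every f ∈ K. -/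
open MeasureTheory Filter Set ENNReal Pointwise

noncomputable section

variable {Ω : Type*} [MeasurableSpace Ω] {X : Type*} [NormedAddCommGroup X] [NormedSpace ℝ X]

/-- A set of functions in `L¹(μ,X)` is uniformly integrable if it is bounded and the integrals
of the norms over small sets are uniformly small. -/
def UnifIntegrableSet (μ : Measure Ω) (K : Set (Lp X 1 μ)) : Prop :=
  (∃ C : ℝ, ∀ f ∈ K, ‖f‖ ≤ C) ∧
  ∀ ε : ℝ, 0 < ε → ∃ δ : ℝ, 0 < δ ∧ ∀ f ∈ K, ∀ A : Set Ω, μ A ≤ ENNReal.ofReal δ →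
    ∫ ω in A, ‖(f : Ω → X) ω‖ ∂μ ≤ ε

/-- `K ⊆ L¹(μ,X)` is a δS-set if it is uniformly integrable and for every `δ > 0` there is a
weakly compact `W ⊆ X` with `μ (f ⁻¹' W) ≥ 1 - δ` for all `f ∈ K`. -/
def IsDeltaSSet (μ : Measure Ω) (K : Set (Lp X 1 μ)) : Prop :=
  UnifIntegrableSet μ K ∧
  ∀ δ : ℝ, 0 < δ → ∃ W : Set X, IsWeaklyCompact W ∧
    ∀ f ∈ K, 1 - ENNReal.ofReal δ ≤ μ ((f : Ω → X) ⁻¹' W)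

/-- A Banach space `X` has property (δSμ) if every relatively weakly compact subset of
`L¹(μ,X)` is a δS-set. -/
def DeltaSProp (μ : Measure Ω) (X : Type*) [NormedAddCommGroup X] [NormedSpace ℝ X] : Prop :=
  ∀ K : Set (Lp X 1 μ), IsRelWeaklyCompact K → IsDeltaSSet μ K


section Helpers

variable {X : Type*} [NormedAddCommGroup X] [NormedSpace ℝ X]


lemma isClosed_normLE (r : ℝ) :
    IsClosed {v : WeakSpace ℝ X | ‖(toWeakSpace ℝ X).symm v‖ ≤ r} := by
  rcases le_or_gt 0 r with hr | hr
  · have : {v : WeakSpace ℝ X | ‖(toWeakSpace ℝ X).symm v‖ ≤ r}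
        = ⋂ φ : StrongDual ℝ X,
          {v : WeakSpace ℝ X | ‖(topDualPairing ℝ X).flip v φ‖ ≤ r * ‖φ‖} := by
      ext v
      simp only [mem_iInter, mem_setOf_eq]
      constructor
      · intro h φ
        calc ‖(topDualPairing ℝ X).flip v φ‖ = ‖φ ((toWeakSpace ℝ X).symm v)‖ := rfl
          _ ≤ ‖φ‖ * ‖(toWeakSpace ℝ X).symm v‖ := φ.le_opNorm _
          _ ≤ r * ‖φ‖ := by rw [mul_comm]; exact mul_le_mul_of_nonneg_right h (norm_nonneg φ)
      · intro h
        exact NormedSpace.norm_le_dual_bound ℝ _ hr fun φ => h φ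
    rw [this]
    exact isClosed_iInter fun φ => isClosed_le
      ((WeakBilin.eval_continuous _ φ).norm) continuous_const
  · have : {v : WeakSpace ℝ X | ‖(toWeakSpace ℝ X).symm v‖ ≤ r} = ∅ := by
      ext v; simp only [mem_setOf_eq, mem_empty_iff_false, iff_false, not_le]
      exact hr.trans_le (norm_nonneg _)
    rw [this]; exact isClosed_empty

lemma image_closedBall_eq (r : ℝ) :
    toWeakSpace ℝ X '' Metric.closedBall 0 r
      = {v : WeakSpace ℝ X | ‖(toWeakSpace ℝ X).symm v‖ ≤ r} := by
  ext v
  constructor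
  · rintro ⟨x, hx, rfl⟩
    simpa [(toWeakSpace ℝ X).symm_apply_apply] using mem_closedBall_zero_iff.mp hx
  · intro h
    exact ⟨(toWeakSpace ℝ X).symm v, mem_closedBall_zero_iff.mpr h,
      (toWeakSpace ℝ X).apply_symm_apply v⟩

lemma topDualPairing_flip_injective :
    Function.Injective ((topDualPairing ℝ X).flip) := by
  intro x y h
  have : ∀ φ : StrongDual ℝ X, φ (x - y) = 0 := by
    intro φ
    have := congrArg (fun ψ => ψ φ) h
    simp only [LinearMap.flip_apply] at this
    simp only [map_sub]
    rw [show (((topDualPairing ℝ X) φ) x : ℝ) = φ x from rfl] at this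
    rw [show (((topDualPairing ℝ X) φ) y : ℝ) = φ y from rfl] at this
    simp [show φ x = φ y from this]
  have := SeparatingDual.eq_zero_of_forall_dual_eq_zero (R := ℝ) this
  exact sub_eq_zero.mp this

lemma groth {X : Type*} [NormedAddCommGroup X] [NormedSpace ℝ X] [CompleteSpace X]
    (C : ℕ → Set (WeakSpace ℝ X)) (hC : ∀ n, IsCompact (C n))
    (ε : ℕ → ℝ) (hε : ∀ n, 0 < ε n) (hεlim : Tendsto ε atTop (nhds 0)) :
    IsCompact (⋂ n, C n + {v : WeakSpace ℝ X | ‖(toWeakSpace ℝ X).symm v‖ ≤ ε n}) := by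
  set D : ℕ → Set (WeakSpace ℝ X) :=
    fun n => {v : WeakSpace ℝ X | ‖(toWeakSpace ℝ X).symm v‖ ≤ ε n} with hD
  set V : Set (WeakSpace ℝ X) := ⋂ n, C n + D n with hV
  have hDclosed : ∀ n, IsClosed (D n) := fun n => isClosed_normLE (ε n)
  have hVclosed : IsClosed V :=
    isClosed_iInter fun n => (hDclosed n).add_left_of_isCompact (hC n)
  rw [isCompact_iff_ultrafilter_le_nhds]
  intro F hF
  have hFmem : V ∈ F := le_principal_iff.mp hF
  -- choice of approximants
  have hex : ∀ n, ∀ v ∈ V, ∃ a, a ∈ C n ∧ v - a ∈ D n := by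
    intro n v hv
    obtain ⟨a, ha, b, hb, hab⟩ := Set.mem_add.mp (mem_iInter.mp hv n)
    exact ⟨a, ha, by rwa [← hab, add_sub_cancel_left]⟩
  classical
  set g : ℕ → WeakSpace ℝ X → WeakSpace ℝ X :=
    fun n v => if h : ∃ a, a ∈ C n ∧ v - a ∈ D n then h.choose else 0 with hg
  have hgspec : ∀ n, ∀ v ∈ V, g n v ∈ C n ∧ v - g n v ∈ D n := by
    intro n v hv
    have h := hex n v hv
    simp only [hg, dif_pos h]
    exact h.choose_spec
  -- weak limits of g n along F
  have hxlim : ∀ n, ∃ x ∈ C n, Tendsto (g n) (↑F) (nhds x) := by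
    intro n
    have hle : ↑(F.map (g n)) ≤ Filter.principal (C n) := by
      rw [Ultrafilter.coe_map, le_principal_iff, mem_map]
      exact mem_of_superset hFmem fun v hv => (hgspec n v hv).1
    obtain ⟨x, hx, hlim⟩ := (hC n).ultrafilter_le_nhds (F.map (g n)) hle
    exact ⟨x, hx, by rwa [Ultrafilter.coe_map] at hlim⟩
  choose x hxC hx using hxlim
  set y : ℕ → X := fun n => (toWeakSpace ℝ X).symm (x n) with hy
  -- Cauchy estimate
  have hyd : ∀ n m, ‖y n - y m‖ ≤ ε n + ε m := by
    intro n m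
    have hsub : Tendsto (fun v => g n v - g m v) (↑F) (nhds (x n - x m)) :=
      (hx n).sub (hx m)
    have hev : ∀ᶠ v in (F : Filter (WeakSpace ℝ X)),
        (fun v => g n v - g m v) v ∈
          {v : WeakSpace ℝ X | ‖(toWeakSpace ℝ X).symm v‖ ≤ ε n + ε m} := by
      filter_upwards [hFmem] with v hv
      have h1 := (hgspec n v hv).2
      have h2 := (hgspec m v hv).2
      simp only [hD, mem_setOf_eq] at h1 h2 ⊢
      have : g n v - g m v = (v - g m v) - (v - g n v) := by abel
      rw [this, map_sub]
      calc ‖(toWeakSpace ℝ X).symm (v - g m v) - (toWeakSpace ℝ X).symm (v - g n v)‖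
          ≤ ‖(toWeakSpace ℝ X).symm (v - g m v)‖ + ‖(toWeakSpace ℝ X).symm (v - g n v)‖ :=
            norm_sub_le _ _
        _ ≤ ε n + ε m := by rw [add_comm (ε n)]; exact add_le_add h2 h1
    have := (isClosed_normLE (ε n + ε m)).mem_of_tendsto hsub hev
    simpa [hy, map_sub] using this
  have hyCauchy : CauchySeq y := by
    rw [Metric.cauchySeq_iff']
    intro r hr
    obtain ⟨N, hN⟩ := (Metric.tendsto_atTop.mp hεlim (r / 2) (by linarith)).imp
      (fun N h => h)
    refine ⟨N, fun n hn => ?_⟩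
    have h1 : ε n < r / 2 := by
      have := hN n hn; rwa [Real.dist_eq, sub_zero, abs_of_pos (hε n)] at this
    have h2 : ε N < r / 2 := by
      have := hN N le_rfl; rwa [Real.dist_eq, sub_zero, abs_of_pos (hε N)] at this
    calc dist (y n) (y N) = ‖y n - y N‖ := by rw [dist_eq_norm]
      _ ≤ ε n + ε N := hyd n N
      _ < r := by linarith
  obtain ⟨z, hz⟩ := cauchySeq_tendsto_of_complete hyCauchy
  have hlim : (F : Filter (WeakSpace ℝ X)) ≤ nhds (toWeakSpace ℝ X z) := by
    have hiff := WeakBilin.tendsto_iff_forall_eval_tendsto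
      (B := (topDualPairing ℝ X).flip) (l := (F : Filter (WeakSpace ℝ X)))
      (f := (id : WeakSpace ℝ X → WeakSpace ℝ X)) (x := toWeakSpace ℝ X z)
      topDualPairing_flip_injective
    have : Tendsto (id : WeakSpace ℝ X → WeakSpace ℝ X) (↑F) (nhds (toWeakSpace ℝ X z)) := by
      refine hiff.mpr ?_
      intro φ
      rw [Metric.tendsto_nhds]
      intro r hr
      have hφpos : (0:ℝ) < ‖φ‖ + 1 := by positivity
      have hεsmall : ∀ᶠ k in atTop, ε k < r / (3 * (‖φ‖ + 1)) := by
        have := Metric.tendsto_atTop.mp hεlim (r / (3 * (‖φ‖ + 1))) (by positivity)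
        obtain ⟨N, hN⟩ := this
        filter_upwards [eventually_ge_atTop N] with k hk
        have := hN k hk
        rwa [Real.dist_eq, sub_zero, abs_of_pos (hε k)] at this
      have hφy : Tendsto (fun n => φ (y n)) atTop (nhds (φ z)) :=
        (φ.continuous.tendsto z).comp hz
      have hφy' : ∀ᶠ n in atTop, dist (φ (y n)) (φ z) < r / 3 :=
        Metric.tendsto_nhds.mp hφy (r / 3) (by linarith)
      obtain ⟨n, h1, h2⟩ := (hεsmall.and hφy').exists
      have hgev : Tendsto (fun v => (topDualPairing ℝ X).flip (g n v) φ) (↑F)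
          (nhds ((topDualPairing ℝ X).flip (x n) φ)) :=
        ((WeakBilin.eval_continuous ((topDualPairing ℝ X).flip) φ).tendsto (x n)).comp (hx n)
      have hgev' := Metric.tendsto_nhds.mp hgev (r / 3) (by linarith)
      filter_upwards [hFmem, hgev'] with v hv hv2
      have hdn := (hgspec n v hv).2
      simp only [hD, mem_setOf_eq] at hdn
      have key1 : dist ((topDualPairing ℝ X).flip (id v) φ)
          ((topDualPairing ℝ X).flip (g n v) φ) < r / 3 := by
        have heq : (topDualPairing ℝ X).flip (id v) φ
            - (topDualPairing ℝ X).flip (g n v) φ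
            = φ ((toWeakSpace ℝ X).symm (v - g n v)) := by
          simp only [id_eq, map_sub]
          rfl
        rw [Real.dist_eq, heq]
        calc |φ ((toWeakSpace ℝ X).symm (v - g n v))|
            ≤ ‖φ‖ * ‖(toWeakSpace ℝ X).symm (v - g n v)‖ := φ.le_opNorm _
          _ ≤ (‖φ‖ + 1) * ε n := by
              apply mul_le_mul (by linarith) hdn (norm_nonneg _) (by linarith)
          _ < (‖φ‖ + 1) * (r / (3 * (‖φ‖ + 1))) :=
              mul_lt_mul_of_pos_left h1 hφpos
          _ = r / 3 := by field_simp
      have key3 : ((topDualPairing ℝ X).flip (x n)) φ = φ (y n) := rfl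
      have key4 : ((topDualPairing ℝ X).flip (toWeakSpace ℝ X z)) φ = φ z := rfl
      rw [key4]
      calc dist ((topDualPairing ℝ X).flip (id v) φ) (φ z)
          ≤ dist ((topDualPairing ℝ X).flip (id v) φ)
              ((topDualPairing ℝ X).flip (g n v) φ)
            + dist ((topDualPairing ℝ X).flip (g n v) φ) (φ z) := dist_triangle _ _ _
        _ ≤ dist ((topDualPairing ℝ X).flip (id v) φ)
              ((topDualPairing ℝ X).flip (g n v) φ)
            + (dist ((topDualPairing ℝ X).flip (g n v) φ) (φ (y n))
              + dist (φ (y n)) (φ z)) := by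
            gcongr
            exact dist_triangle _ _ _
        _ < r / 3 + (r / 3 + r / 3) := by
            gcongr
            rwa [key3] at hv2
        _ = r := by ring
    exact this
  refine ⟨toWeakSpace ℝ X z, ?_, hlim⟩
  exact hVclosed.mem_of_tendsto hlim (mem_of_superset hFmem fun v hv => hv)

end Helpers

/-- `K ⊆ L¹(μ,X)` is a δS-set iff it is uniformly integrable and for every `δ > 0` and `ε > 0`
there is a weakly compact `W ⊆ X` with `μ (f ⁻¹' (W + ε B_X)) ≥ 1 - δ` for all `f ∈ K`. -/
theorem isDeltaSSet_iff_enlarged (μ : Measure Ω) [IsProbabilityMeasure μ] [CompleteSpace X]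
    (K : Set (Lp X 1 μ)) :
    IsDeltaSSet μ K ↔ UnifIntegrableSet μ K ∧
      ∀ δ : ℝ, 0 < δ → ∀ ε : ℝ, 0 < ε → ∃ W : Set X, IsWeaklyCompact W ∧
        ∀ f ∈ K, 1 - ENNReal.ofReal δ ≤ μ ((f : Ω → X) ⁻¹' (W + Metric.closedBall (0 : X) ε)) := by
  constructor
  · rintro ⟨hUI, hW⟩
    refine ⟨hUI, fun δ hδ ε hε => ?_⟩
    obtain ⟨W, hWc, hWμ⟩ := hW δ hδ
    refine ⟨W, hWc, fun f hf => (hWμ f hf).trans (measure_mono (preimage_mono ?_))⟩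
    exact Set.subset_add_left W (Metric.mem_closedBall_self hε.le)
  · rintro ⟨hUI, h⟩
    refine ⟨hUI, fun δ hδ => ?_⟩
    borelize X
    have hpos : ∀ n : ℕ, (0:ℝ) < (1/2) ^ (n+1) := fun n => by positivity
    have hxc : ∀ n : ℕ, ∃ W : Set X, IsWeaklyCompact W ∧
        ∀ f ∈ K, 1 - ENNReal.ofReal (δ * (1/2) ^ (n+1)) ≤
          μ ((f : Ω → X) ⁻¹' (W + Metric.closedBall (0 : X) ((1/2) ^ (n+1)))) :=
      fun n => h _ (by positivity) _ (hpos n)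
    choose W hWc hWμ using hxc
    set S : ℕ → Set X := fun n => W n + Metric.closedBall (0 : X) ((1/2) ^ (n+1)) with hS
    -- weak description of S n
    have himg : ∀ n, toWeakSpace ℝ X '' S n
        = toWeakSpace ℝ X '' W n
          + {v : WeakSpace ℝ X | ‖(toWeakSpace ℝ X).symm v‖ ≤ (1/2) ^ (n+1)} := by
      intro n
      rw [hS, Set.image_add, image_closedBall_eq]
    have hSclosedWeak : ∀ n, IsClosed (toWeakSpace ℝ X '' S n) := by
      intro n
      rw [himg n]
      exact (isClosed_normLE _).add_left_of_isCompact (hWc n)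
    have hSclosed : ∀ n, IsClosed (S n) := by
      intro n
      have : S n = toWeakSpaceCLM ℝ X ⁻¹' (toWeakSpace ℝ X '' S n) := by
        ext x
        simp only [Set.mem_preimage]
        constructor
        · intro hx; exact ⟨x, hx, rfl⟩
        · rintro ⟨x', hx', hxx⟩
          have : x' = x := (toWeakSpace ℝ X).injective (by exact hxx)
          rwa [← this]
      rw [this]
      exact (hSclosedWeak n).preimage (toWeakSpaceCLM ℝ X).continuous
    refine ⟨⋂ n, S n, ?_, ?_⟩
    · -- weak compactness via the Grothendieck-type lemma
      unfold IsWeaklyCompact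
      rw [Set.image_iInter (toWeakSpace ℝ X).bijective]
      have := groth (fun n => toWeakSpace ℝ X '' W n) (fun n => hWc n)
        (fun n => (1/2) ^ (n+1)) hpos ?_
      · rw [iInter_congr himg]
        exact this
      · have h2 : Tendsto (fun n : ℕ => ((1:ℝ)/2) ^ n) atTop (nhds 0) :=
          tendsto_pow_atTop_nhds_zero_of_lt_one (by norm_num) (by norm_num)
        exact (h2.comp (tendsto_add_atTop_nat 1))
    · intro f hf
      have hfm : Measurable (f : Ω → X) := (Lp.stronglyMeasurable f).measurable
      have hA : ∀ n, MeasurableSet ((f : Ω → X) ⁻¹' S n) :=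
        fun n => hfm (hSclosed n).measurableSet
      have hAi : MeasurableSet ((f : Ω → X) ⁻¹' ⋂ n, S n) := by
        rw [Set.preimage_iInter]; exact MeasurableSet.iInter fun n => hA n
      have hcompl : μ (((f : Ω → X) ⁻¹' ⋂ n, S n)ᶜ) ≤ ENNReal.ofReal δ := by
        rw [Set.preimage_iInter, Set.compl_iInter]
        refine (measure_iUnion_le _).trans ?_
        have hbound : ∀ n, μ (((f : Ω → X) ⁻¹' S n)ᶜ)
            ≤ ENNReal.ofReal (δ * (1/2) ^ (n+1)) := by
          intro n
          rw [prob_compl_eq_one_sub (hA n)]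
          calc (1 : ℝ≥0∞) - μ ((f : Ω → X) ⁻¹' S n)
              ≤ 1 - (1 - ENNReal.ofReal (δ * (1/2) ^ (n+1))) :=
                tsub_le_tsub_left (hWμ n f hf) 1
            _ ≤ ENNReal.ofReal (δ * (1/2) ^ (n+1)) := tsub_tsub_le
        refine (ENNReal.tsum_le_tsum hbound).trans ?_
        have hsummable : Summable (fun n : ℕ => δ * (1/2) ^ (n+1)) := by
          apply Summable.mul_left
          exact (summable_geometric_of_lt_one (by norm_num) (by norm_num)).comp_injective
            (add_left_injective 1)
        rw [← ENNReal.ofReal_tsum_of_nonneg (fun n => by positivity) hsummable]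
        apply ENNReal.ofReal_le_ofReal
        have : ∑' n : ℕ, δ * (1/2) ^ (n+1) = δ * ∑' n : ℕ, (1/2 : ℝ) ^ (n+1) := by
          rw [tsum_mul_left]
        rw [this]
        have hgeom : ∑' n : ℕ, ((1:ℝ)/2) ^ (n+1) = 1 := by
          have h1 : ∀ n : ℕ, ((1:ℝ)/2) ^ (n+1) = (1/2) * (1/2) ^ n := fun n => by ring
          simp_rw [h1]
          rw [tsum_mul_left, tsum_geometric_of_lt_one (by norm_num) (by norm_num)]
          norm_num
        rw [hgeom, mul_one]
      have : μ ((f : Ω → X) ⁻¹' ⋂ n, S n) = 1 - μ (((f : Ω → X) ⁻¹' ⋂ n, S n)ᶜ) := by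
        rw [← prob_compl_eq_one_sub hAi.compl, compl_compl]
      rw [this]
      exact tsub_le_tsub_left hcompl 1
end
end

section
/- Let (Ω,Σ,μ) be a probability space, X a Banach space, and f: Ω → X a strongly measurable function. Then for every measurable set A ∈ Σ there exists a sequence of simple functions f_n: Ω → X such that (1) f_n → f μ-almost everywhere, (2) ‖f_n(ω)‖ ≤ 1/n + ‖f(ω)‖ for every ω ∈ Ω and every n, and (3) f_n(A) ⊆ f(A) ∪ {0} for every n. -/
open MeasureTheory Filter Set
open scoped ENNReal

noncomputable section

namespace ExistsSimpleFuncApproxAux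

open scoped Classical

variable {Ω : Type*} [MeasurableSpace Ω] {X : Type*} [NormedAddCommGroup X]

/-- `Nat.find + 1` of the first index `k` with `ω ∈ S k`, or `0` if there is none. -/
noncomputable def selIdx (S : ℕ → Set Ω) (ω : Ω) : ℕ :=
  if h : ∃ k, ω ∈ S k then Nat.find h + 1 else 0

lemma selIdx_eq_zero_iff {S : ℕ → Set Ω} {ω : Ω} :
    selIdx S ω = 0 ↔ ∀ k, ω ∉ S k := by
  unfold selIdx
  split
  · next h' => exact iff_of_false (by omega) (fun h => h _ (Nat.find_spec h'))
  · next h' => exact iff_of_true rfl (fun k hk => h' ⟨k, hk⟩)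

lemma selIdx_spec {S : ℕ → Set Ω} {ω : Ω} {k : ℕ} (h : selIdx S ω = k + 1) :
    ω ∈ S k ∧ ∀ j < k, ω ∉ S j := by
  unfold selIdx at h
  split at h
  · next h' =>
    obtain rfl : Nat.find h' = k := by omega
    exact ⟨Nat.find_spec h', fun j hj => Nat.find_min h' hj⟩
  · omega

/-- The selection map as a simple function, assuming measurable levels and that
levels beyond `m` are empty. -/
noncomputable def selSF (S : ℕ → Set Ω) (hS : ∀ k, MeasurableSet (S k)) (m : ℕ)
    (hm : ∀ k, m < k → S k = ∅) : SimpleFunc Ω ℕ where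
  toFun := selIdx S
  measurableSet_fiber' := by
    intro i
    match i with
    | 0 =>
      have : selIdx S ⁻¹' {0} = (⋃ k, S k)ᶜ := by
        ext ω
        simp only [mem_preimage, mem_singleton_iff, selIdx_eq_zero_iff, mem_compl_iff,
          mem_iUnion, not_exists]
      rw [this]
      exact (MeasurableSet.iUnion hS).compl
    | k + 1 =>
      have : selIdx S ⁻¹' {k + 1} = S k ∩ ⋂ j ∈ Finset.range k, (S j)ᶜ := by
        ext ω
        simp only [mem_preimage, mem_singleton_iff, mem_inter_iff, mem_iInter,
          Finset.mem_range, mem_compl_iff]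
        constructor
        · intro h
          exact ⟨(selIdx_spec h).1, fun j hj => (selIdx_spec h).2 j hj⟩
        · rintro ⟨h1, h2⟩
          have h' : ∃ k, ω ∈ S k := ⟨k, h1⟩
          unfold selIdx
          rw [dif_pos h']
          have hfind : Nat.find h' = k := by
            rcases Nat.lt_trichotomy (Nat.find h') k with h | h | h
            · exact ((h2 _ h) (Nat.find_spec h')).elim
            · exact h
            · exact (Nat.find_min h' h h1).elim
          omega
      rw [this]
      exact (hS k).inter (MeasurableSet.biInter (to_countable _) fun j _ => (hS j).compl)
  finite_range' := by
    apply (Set.finite_Iic (m + 1)).subset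
    rintro i ⟨ω, rfl⟩
    cases h : selIdx S ω with
    | zero => simp
    | succ k =>
      have hk := (selIdx_spec h).1
      have : k ≤ m := by
        by_contra hc
        push_neg at hc
        rw [hm k hc] at hk
        exact hk
      simp only [Set.mem_Iic]
      omega

/-- Shift a sequence, putting `0` in front. -/
def shift0 (u : ℕ → X) : ℕ → X
  | 0 => 0
  | k + 1 => u k

/-- The candidate sets: `ω` such that `g ω` is within `ε` of `u k`, for `k ≤ m`. -/
def distSet (g : Ω → X) (u : ℕ → X) (ε : ℝ) (m k : ℕ) : Set Ω :=
  if k ≤ m then {ω | dist (g ω) (u k) < ε} else ∅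

lemma mem_distSet_iff {g : Ω → X} {u : ℕ → X} {ε : ℝ} {m k : ℕ} {ω : Ω} :
    ω ∈ distSet g u ε m k ↔ k ≤ m ∧ dist (g ω) (u k) < ε := by
  unfold distSet
  split_ifs with h <;> simp [h]

lemma distSet_measurable {g : Ω → X} (hg : StronglyMeasurable g) (u : ℕ → X) (ε : ℝ)
    (m k : ℕ) : MeasurableSet (distSet g u ε m k) := by
  unfold distSet
  split_ifs with h
  · exact measurableSet_lt ((hg.dist stronglyMeasurable_const).measurable) measurable_const
  · exact MeasurableSet.empty

lemma distSet_empty {g : Ω → X} {u : ℕ → X} {ε : ℝ} {m k : ℕ} (h : m < k) :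
    distSet g u ε m k = ∅ := by
  unfold distSet
  rw [if_neg (by omega)]

/-- Dense sequence in the image of a set under a strongly measurable map (with `0` added). -/
lemma exists_dense_seq {g : Ω → X} (hg : StronglyMeasurable g) (B : Set Ω) :
    ∃ u : ℕ → X, (∀ k, u k = 0 ∨ u k ∈ g '' B) ∧
      ∀ ω ∈ B, ∀ ε : ℝ, 0 < ε → ∃ k, dist (g ω) (u k) < ε := by
  have hsep : TopologicalSpace.IsSeparable (g '' B) :=
    hg.isSeparable_range.mono (image_subset_range _ _)
  obtain ⟨t, hts, htc, htd⟩ := hsep.exists_countable_dense_subset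
  obtain ⟨u, hu⟩ := (htc.insert (0 : X)).exists_eq_range (insert_nonempty _ _)
  refine ⟨u, ?_, ?_⟩
  · intro k
    have hmem : u k ∈ insert (0 : X) t := by rw [hu]; exact mem_range_self k
    rcases hmem with h | h
    · exact Or.inl h
    · exact Or.inr (hts h)
  · intro ω hω ε hε
    have hcl : g ω ∈ closure t := htd (mem_image_of_mem _ hω)
    obtain ⟨y, hyt, hy⟩ := Metric.mem_closure_iff.1 hcl ε hε
    have : y ∈ range u := by rw [← hu]; exact mem_insert_of_mem _ hyt
    obtain ⟨k, rfl⟩ := this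
    exact ⟨k, hy⟩

end ExistsSimpleFuncApproxAux

open ExistsSimpleFuncApproxAux

/-- Approximation of a strongly measurable function (an a.e. limit of simple functions)
by simple functions with controlled norms and with values on `A` taken in `f '' A ∪ {0}`. -/
theorem exists_simpleFunc_approx {Ω : Type*} [MeasurableSpace Ω]
    {X : Type*} [NormedAddCommGroup X] [NormedSpace ℝ X]
    (μ : Measure Ω) [IsProbabilityMeasure μ] (f : Ω → X)
    (hf : ∃ g : ℕ → SimpleFunc Ω X, ∀ᵐ ω ∂μ, Tendsto (fun n => g n ω) atTop (nhds (f ω)))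
    (A : Set Ω) (hA : MeasurableSet A) :
    ∃ fn : ℕ → SimpleFunc Ω X,
      (∀ᵐ ω ∂μ, Tendsto (fun n => fn n ω) atTop (nhds (f ω))) ∧
      (∀ ω : Ω, ∀ n : ℕ, ‖fn n ω‖ ≤ 1 / (n + 1 : ℝ) + ‖f ω‖) ∧
      (∀ n : ℕ, (fn n) '' A ⊆ f '' A ∪ {0}) := by
  classical
  obtain ⟨gs, hgs⟩ := hf
  have hfm : AEStronglyMeasurable f μ :=
    aestronglyMeasurable_of_tendsto_ae atTop
      (fun n => (gs n).aestronglyMeasurable) hgs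
  set g : Ω → X := hfm.mk f with hg_def
  have hgm : StronglyMeasurable g := hfm.stronglyMeasurable_mk
  have hfg : f =ᵐ[μ] g := hfm.ae_eq_mk
  -- the exceptional measurable null set
  set N : Set Ω := toMeasurable μ {ω | f ω ≠ g ω} with hN_def
  have hNm : MeasurableSet N := measurableSet_toMeasurable μ _
  have hNnull : μ N = 0 := by
    rw [hN_def, measure_toMeasurable]
    exact ae_iff.mp hfg
  have hNsub : ∀ ω, ω ∉ N → f ω = g ω := by
    intro ω hω
    by_contra h
    exact hω (subset_toMeasurable μ _ h)
  -- dense sequences on both sides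
  obtain ⟨u, hu_mem, hu_dense⟩ := exists_dense_seq hgm (A \ N)
  obtain ⟨v, _hv_mem, hv_dense⟩ := exists_dense_seq hgm (Aᶜ \ N)
  have eps_pos : ∀ n : ℕ, (0 : ℝ) < 1 / (n + 1 : ℝ) := by
    intro n
    positivity
  -- bad sets for a given truncation parameter m
  set DA : ℕ → ℕ → Set Ω := fun n m =>
    (A \ N) \ ⋃ k, distSet g u (1 / (n + 1 : ℝ)) m k with hDA_def
  set DB : ℕ → ℕ → Set Ω := fun n m =>
    (Aᶜ \ N) \ ⋃ k, distSet g v (1 / (n + 1 : ℝ)) m k with hDB_def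
  have hDAm : ∀ n m, MeasurableSet (DA n m) := fun n m =>
    (hA.diff hNm).diff (MeasurableSet.iUnion fun k => distSet_measurable hgm _ _ _ _)
  have hDBm : ∀ n m, MeasurableSet (DB n m) := fun n m =>
    (hA.compl.diff hNm).diff (MeasurableSet.iUnion fun k => distSet_measurable hgm _ _ _ _)
  have hmono : ∀ (w : ℕ → X) (ε : ℝ) (B : Set Ω), Antitone (fun m => (B \ N) \
      ⋃ k, distSet g w ε m k) := by
    intro w ε B m m' hmm'
    apply diff_subset_diff_right
    apply iUnion_mono
    intro k
    intro ω hω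
    rw [mem_distSet_iff] at hω ⊢
    exact ⟨hω.1.trans hmm', hω.2⟩
  -- the intersection over m of bad sets is empty (by density)
  have hDAempty : ∀ n, (⋂ m, DA n m) = ∅ := by
    intro n
    ext ω
    simp only [mem_iInter, mem_empty_iff_false, iff_false]
    intro h
    obtain ⟨hωAN, -⟩ := h 0
    obtain ⟨k, hk⟩ := hu_dense ω hωAN _ (eps_pos n)
    exact (h k).2 (mem_iUnion.2 ⟨k, mem_distSet_iff.2 ⟨le_refl k, hk⟩⟩)
  have hDBempty : ∀ n, (⋂ m, DB n m) = ∅ := by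
    intro n
    ext ω
    simp only [mem_iInter, mem_empty_iff_false, iff_false]
    intro h
    obtain ⟨hωAN, -⟩ := h 0
    obtain ⟨k, hk⟩ := hv_dense ω hωAN _ (eps_pos n)
    exact (h k).2 (mem_iUnion.2 ⟨k, mem_distSet_iff.2 ⟨le_refl k, hk⟩⟩)
  -- choose truncation parameters
  have hchoice : ∀ n : ℕ, ∃ m : ℕ, μ (DA n m) < 2⁻¹ ^ n ∧ μ (DB n m) < 2⁻¹ ^ n := by
    intro n
    have hpow : (0 : ℝ≥0∞) < 2⁻¹ ^ n := by
      apply ENNReal.pow_pos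
      simp
    have hTA : Tendsto (fun m => μ (DA n m)) atTop (nhds 0) := by
      have := tendsto_measure_iInter_atTop (μ := μ)
        (fun m => (hDAm n m).nullMeasurableSet) (hmono u _ A)
        ⟨0, measure_ne_top μ _⟩
      rw [show (⋂ m, DA n m) = ∅ from hDAempty n] at this
      simpa [Function.comp_def] using this
    have hTB : Tendsto (fun m => μ (DB n m)) atTop (nhds 0) := by
      have := tendsto_measure_iInter_atTop (μ := μ)
        (fun m => (hDBm n m).nullMeasurableSet) (hmono v _ Aᶜ)
        ⟨0, measure_ne_top μ _⟩
      rw [show (⋂ m, DB n m) = ∅ from hDBempty n] at this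
      simpa [Function.comp_def] using this
    have hA' := hTA.eventually_lt_const hpow
    have hB' := hTB.eventually_lt_const hpow
    exact ((hA'.and hB').exists)
  choose m hmA hmB using hchoice
  -- the simple functions
  set fn : ℕ → SimpleFunc Ω X := fun n =>
    SimpleFunc.piecewise N hNm (SimpleFunc.const Ω 0)
      (SimpleFunc.piecewise A hA
        ((selSF (distSet g u (1 / (n + 1 : ℝ)) (m n))
            (fun k => distSet_measurable hgm _ _ _ _) (m n)
            (fun k hk => distSet_empty hk)).map (shift0 u))
        ((selSF (distSet g v (1 / (n + 1 : ℝ)) (m n))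
            (fun k => distSet_measurable hgm _ _ _ _) (m n)
            (fun k hk => distSet_empty hk)).map (shift0 v))) with hfn_def
  have fn_eq : ∀ n ω, fn n ω =
      if ω ∈ N then 0 else
        if ω ∈ A then shift0 u (selIdx (distSet g u (1 / (n + 1 : ℝ)) (m n)) ω)
        else shift0 v (selIdx (distSet g v (1 / (n + 1 : ℝ)) (m n)) ω) := by
    intro n ω
    rw [hfn_def]
    simp only [SimpleFunc.piecewise_apply, SimpleFunc.coe_const, Function.const_apply,
      SimpleFunc.map_apply]
    rfl
  refine ⟨fn, ?_, ?_, ?_⟩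
  · -- a.e. convergence
    have hsum : (∑' n, μ (DA n (m n) ∪ DB n (m n))) ≠ ∞ := by
      have hle : ∀ n, μ (DA n (m n) ∪ DB n (m n)) ≤ 2⁻¹ ^ n + 2⁻¹ ^ n := fun n =>
        (measure_union_le _ _).trans (add_le_add (hmA n).le (hmB n).le)
      have := ENNReal.tsum_le_tsum hle
      apply ne_top_of_le_ne_top _ this
      rw [ENNReal.tsum_add, ENNReal.tsum_geometric, ENNReal.one_sub_inv_two]
      simp [ENNReal.inv_ne_top]
    have hBC := ae_eventually_notMem (μ := μ) hsum
    have hNae : ∀ᵐ ω ∂μ, ω ∉ N := measure_eq_zero_iff_ae_notMem.mp hNnull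
    filter_upwards [hBC, hNae] with ω hω1 hω2
    have hdist_ev : ∀ᶠ n in atTop, dist (fn n ω) (f ω) < 1 / (n + 1 : ℝ) := by
      filter_upwards [hω1] with n hn
      have hfgω : f ω = g ω := hNsub ω hω2
      by_cases hωA : ω ∈ A
      · have hωAN : ω ∈ A \ N := ⟨hωA, hω2⟩
        have hnotDA : ω ∉ DA n (m n) := fun h => hn (Or.inl h)
        have hU : ω ∈ ⋃ k, distSet g u (1 / (n + 1 : ℝ)) (m n) k := by
          by_contra h
          exact hnotDA ⟨hωAN, h⟩
        obtain ⟨k, hk⟩ := mem_iUnion.1 hU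
        -- selIdx is nonzero
        cases hsel : selIdx (distSet g u (1 / (n + 1 : ℝ)) (m n)) ω with
        | zero => exact ((selIdx_eq_zero_iff.1 hsel) k hk).elim
        | succ j =>
          have hj := (selIdx_spec hsel).1
          rw [fn_eq, if_neg hω2, if_pos hωA, hsel]
          have : dist (g ω) (u j) < 1 / (n + 1 : ℝ) := (mem_distSet_iff.1 hj).2
          rw [hfgω]
          calc dist (shift0 u (j + 1)) (g ω) = dist (g ω) (u j) := by
                simp [shift0, dist_comm]
            _ < 1 / (n + 1 : ℝ) := this
      · have hωAN : ω ∈ Aᶜ \ N := ⟨hωA, hω2⟩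
        have hnotDB : ω ∉ DB n (m n) := fun h => hn (Or.inr h)
        have hU : ω ∈ ⋃ k, distSet g v (1 / (n + 1 : ℝ)) (m n) k := by
          by_contra h
          exact hnotDB ⟨hωAN, h⟩
        obtain ⟨k, hk⟩ := mem_iUnion.1 hU
        cases hsel : selIdx (distSet g v (1 / (n + 1 : ℝ)) (m n)) ω with
        | zero => exact ((selIdx_eq_zero_iff.1 hsel) k hk).elim
        | succ j =>
          have hj := (selIdx_spec hsel).1
          rw [fn_eq, if_neg hω2, if_neg hωA, hsel]
          have : dist (g ω) (v j) < 1 / (n + 1 : ℝ) := (mem_distSet_iff.1 hj).2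
          rw [hfgω]
          calc dist (shift0 v (j + 1)) (g ω) = dist (g ω) (v j) := by
                simp [shift0, dist_comm]
            _ < 1 / (n + 1 : ℝ) := this
    have hten : Tendsto (fun n : ℕ => dist (fn n ω) (f ω)) atTop (nhds 0) := by
      apply squeeze_zero' (Eventually.of_forall fun n => dist_nonneg)
        (hdist_ev.mono fun n h => h.le)
      exact tendsto_one_div_add_atTop_nhds_zero_nat
    exact tendsto_iff_dist_tendsto_zero.2 hten
  · -- the norm bound
    intro ω n
    rw [fn_eq]
    by_cases hωN : ω ∈ N
    · rw [if_pos hωN]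
      simp only [norm_zero]
      have := norm_nonneg (f ω)
      have := (eps_pos n).le
      linarith
    · rw [if_neg hωN]
      have hfgω : f ω = g ω := hNsub ω hωN
      by_cases hωA : ω ∈ A
      · rw [if_pos hωA]
        cases hsel : selIdx (distSet g u (1 / (n + 1 : ℝ)) (m n)) ω with
        | zero =>
          simp only [shift0, norm_zero]
          have := norm_nonneg (f ω)
          have := (eps_pos n).le
          linarith
        | succ j =>
          have hj := (selIdx_spec hsel).1
          have hd : dist (g ω) (u j) < 1 / (n + 1 : ℝ) := (mem_distSet_iff.1 hj).2
          have : ‖u j‖ ≤ dist (u j) (g ω) + ‖g ω‖ := by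
            have := dist_triangle (u j) (g ω) 0
            simpa [dist_zero_right] using this
          rw [dist_comm] at hd
          show ‖shift0 u (j + 1)‖ ≤ _
          simp only [shift0]
          rw [hfgω]
          linarith
      · rw [if_neg hωA]
        cases hsel : selIdx (distSet g v (1 / (n + 1 : ℝ)) (m n)) ω with
        | zero =>
          simp only [shift0, norm_zero]
          have := norm_nonneg (f ω)
          have := (eps_pos n).le
          linarith
        | succ j =>
          have hj := (selIdx_spec hsel).1
          have hd : dist (g ω) (v j) < 1 / (n + 1 : ℝ) := (mem_distSet_iff.1 hj).2
          have : ‖v j‖ ≤ dist (v j) (g ω) + ‖g ω‖ := by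
            have := dist_triangle (v j) (g ω) 0
            simpa [dist_zero_right] using this
          rw [dist_comm] at hd
          show ‖shift0 v (j + 1)‖ ≤ _
          simp only [shift0]
          rw [hfgω]
          linarith
  · -- values on A
    intro n x hx
    obtain ⟨ω, hωA, rfl⟩ := hx
    rw [fn_eq]
    by_cases hωN : ω ∈ N
    · rw [if_pos hωN]
      exact Or.inr rfl
    · rw [if_neg hωN, if_pos hωA]
      cases hsel : selIdx (distSet g u (1 / (n + 1 : ℝ)) (m n)) ω with
      | zero => exact Or.inr rfl
      | succ j =>
        show shift0 u (j + 1) ∈ _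
        simp only [shift0]
        rcases hu_mem j with h | h
        · exact Or.inr h
        · obtain ⟨a, ha, hga⟩ := h
          exact Or.inl ⟨a, ha.1, by rw [hNsub a ha.2, hga]⟩
end
end

section
/- Let X be a Banach space that strongly generates its weakly compact sets via a weakly compact set G (i.e., X is SWCG witnessed by G). Let (Ω,Σ,μ) be a probability space and K ⊆ L¹(μ,X) a set such that every countable subset of K is a δS-set. Then K is a δS-set. -/
open MeasureTheory Filter Set ENNReal Pointwise

noncomputable section

variable {Ω : Type*} [MeasurableSpace Ω] {X : Type*} [NormedAddCommGroup X] [NormedSpace ℝ X]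

/-- `G` strongly generates the weakly compact subsets of `X`: `G` is weakly compact and every
weakly compact set is, for each `ε > 0`, contained in `n • G + ε B_X` for some `n`. -/
def StronglyGenerates {X : Type*} [NormedAddCommGroup X] [NormedSpace ℝ X] (G : Set X) : Prop :=
  IsWeaklyCompact G ∧ ∀ W : Set X, IsWeaklyCompact W → ∀ ε : ℝ, 0 < ε →
    ∃ n : ℕ, W ⊆ (n : ℝ) • G + Metric.closedBall (0 : X) ε

section Aux

open NormedSpace Topology Metric

/-- The canonical map from `X` with its weak topology to the bidual with its weak-star
topology. -/
abbrev Jmap (X : Type*) [NormedAddCommGroup X] [NormedSpace ℝ X] :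
    WeakSpace ℝ X → WeakDual ℝ (StrongDual ℝ X) :=
  fun x => (inclusionInDoubleDual ℝ X ((toWeakSpace ℝ X).symm x) : StrongDual ℝ (StrongDual ℝ X))

theorem Jmap_inducing : Topology.IsInducing (Jmap X) := by
  constructor
  change _ = TopologicalSpace.induced (Jmap X) (TopologicalSpace.induced
    (fun (z : WeakDual ℝ (StrongDual ℝ X)) (ℓ : StrongDual ℝ X) => (topDualPairing ℝ (StrongDual ℝ X)) z ℓ)
    Pi.topologicalSpace)
  rw [induced_compose]
  rfl

theorem Jmap_injective : Function.Injective (Jmap X) := by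
  intro a b hab
  have := (inclusionInDoubleDualLi ℝ (E := X)).injective
  have h2 : (toWeakSpace ℝ X).symm a = (toWeakSpace ℝ X).symm b := by
    apply this
    exact hab
  simpa using congrArg (toWeakSpace ℝ X) h2

theorem Jmap_embedding : Topology.IsEmbedding (Jmap X) :=
  ⟨Jmap_inducing, Jmap_injective⟩

/-- Grothendieck-type lemma: the intersection of the weak closures of the sets
`nₘ • G + (1/(m+1)) B` is weakly compact when `G` is weakly compact. -/
theorem isCompact_iInter_closure [CompleteSpace X]
    {G : Set X} (hGc : IsCompact (toWeakSpace ℝ X '' G))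
    (n : ℕ → ℕ) :
    IsCompact (⋂ m : ℕ, closure (toWeakSpace ℝ X '' ((n m : ℝ) • G +
      Metric.closedBall (0 : X) (1 / (m + 1))))) := by
  set tw := toWeakSpace ℝ X with htw
  set J := Jmap X with hJ
  set C : ℕ → Set X := fun m => (n m : ℝ) • G + Metric.closedBall (0 : X) (1 / (m + 1)) with hC
  set D : ℕ → Set (WeakSpace ℝ X) := fun m => closure (tw '' C m) with hD
  set A : Set (WeakSpace ℝ X) := ⋂ m, D m with hA
  have hAclosed : IsClosed A := isClosed_iInter fun m => isClosed_closure
  set P : ℕ → Set (WeakDual ℝ (StrongDual ℝ X)) := fun m => J '' (tw '' ((n m : ℝ) • G)) with hP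
  haveI : ContinuousSMul ℝ (WeakSpace ℝ X) :=
    WeakBilin.instContinuousSMul ((topDualPairing ℝ X).flip)
  have hPc : ∀ m, IsCompact (P m) := by
    intro m
    have h1 : tw '' ((n m : ℝ) • G) = (n m : ℝ) • (tw '' G) := by
      exact image_smul_set tw _ G
    rw [hP]
    simp only [h1]
    exact (hGc.smul ((n m : ℝ))).image (Jmap_inducing (X := X)).continuous
  set Q : ℕ → Set (WeakDual ℝ (StrongDual ℝ X)) := fun m =>
    WeakDual.toStrongDual ⁻¹' Metric.closedBall 0 (1 / (m + 1)) with hQ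
  have hQc : ∀ m, IsCompact (Q m) :=
    fun m => WeakDual.isCompact_closedBall (𝕜 := ℝ) (E := StrongDual ℝ X) 0 (1 / (m + 1))
  have hRc : ∀ m, IsCompact (P m + Q m) := fun m => (hPc m).add (hQc m)
  have hJC : ∀ m, J '' (tw '' C m) ⊆ P m + Q m := by
    intro m
    rw [hC]
    rintro z ⟨y, ⟨x, hx, rfl⟩, rfl⟩
    rcases hx with ⟨a, ha, b, hb, rfl⟩
    refine ⟨J (tw a), ⟨tw a, ⟨a, ha, rfl⟩, rfl⟩, J (tw b), ?_, by
      simp [hJ, Jmap, map_add]; rfl⟩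
    have hb' : ‖b‖ ≤ 1 / (m + 1) := by
      simpa [Metric.mem_closedBall, dist_zero_right] using hb
    have : ‖(inclusionInDoubleDual ℝ X) b‖ ≤ 1 / (m + 1) := by
      rw [← (inclusionInDoubleDualLi ℝ (E := X)).norm_map b] at hb'
      exact hb'
    show WeakDual.toStrongDual (J (tw b)) ∈ Metric.closedBall (0 : StrongDual ℝ (StrongDual ℝ X)) (1 / (m + 1))
    rw [Metric.mem_closedBall]
    exact (dist_zero_right (WeakDual.toStrongDual (J (tw b)) : StrongDual ℝ (StrongDual ℝ X))).trans_le this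
  have hJD : ∀ m, J '' D m ⊆ P m + Q m := by
    intro m
    refine (image_closure_subset_closure_image (Jmap_inducing (X := X)).continuous).trans ?_
    exact closure_minimal (hJC m) (hRc m).isClosed
  set Z : Set (WeakDual ℝ (StrongDual ℝ X)) := closure (J '' A) with hZ
  have hZsub : ∀ m, Z ⊆ P m + Q m := by
    intro m
    apply closure_minimal _ (hRc m).isClosed
    exact (Set.image_mono (Set.iInter_subset D m)).trans (hJD m)
  have hZc : IsCompact Z := (hRc 0).of_isClosed_subset isClosed_closure (hZsub 0)
  have hrange : ∀ z ∈ Z, ∃ x : X, inclusionInDoubleDual ℝ X x = WeakDual.toStrongDual z := by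
    intro z hz
    have hcl : (WeakDual.toStrongDual z : StrongDual ℝ (StrongDual ℝ X)) ∈
        closure (Set.range (inclusionInDoubleDual ℝ X)) := by
      refine (Metric.mem_closure_iff (α := StrongDual ℝ (StrongDual ℝ X))).mpr ?_
      intro ε hε
      obtain ⟨m, hm⟩ := exists_nat_one_div_lt hε
      obtain ⟨p, hp, q, hq, hpq⟩ := hZsub m hz
      obtain ⟨y, ⟨x, -, rfl⟩, rfl⟩ := hp
      refine ⟨inclusionInDoubleDual ℝ X x, Set.mem_range_self _, ?_⟩
      have hq' : ‖(WeakDual.toStrongDual q : StrongDual ℝ (StrongDual ℝ X))‖ ≤ 1 / (m + 1) := by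
        have hq2 : dist (WeakDual.toStrongDual q : StrongDual ℝ (StrongDual ℝ X)) 0 ≤ 1 / (m + 1) := hq
        exact (dist_zero_right (WeakDual.toStrongDual q : StrongDual ℝ (StrongDual ℝ X))).symm.trans_le hq2
      have : (WeakDual.toStrongDual z : StrongDual ℝ (StrongDual ℝ X)) - inclusionInDoubleDual ℝ X x =
          WeakDual.toStrongDual q := by
        rw [← hpq]
        exact add_sub_cancel_left (inclusionInDoubleDual ℝ X x) (WeakDual.toStrongDual q)
      have hd : dist (WeakDual.toStrongDual z : StrongDual ℝ (StrongDual ℝ X)) (inclusionInDoubleDual ℝ X x) =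
          ‖(WeakDual.toStrongDual q : StrongDual ℝ (StrongDual ℝ X))‖ := by
        rw [← this]
        exact dist_eq_norm (WeakDual.toStrongDual z : StrongDual ℝ (StrongDual ℝ X)) (inclusionInDoubleDual ℝ X x)
      exact hd.trans_lt (lt_of_le_of_lt hq' hm)
    have hclosed : IsClosed (Set.range (inclusionInDoubleDual ℝ X)) := by
      have : Set.range (inclusionInDoubleDual ℝ X) =
          Set.range (inclusionInDoubleDualLi ℝ (E := X)) := rfl
      rw [this]
      exact ((inclusionInDoubleDualLi ℝ (E := X)).isometry.isUniformInducing.isComplete_range).isClosed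
    rw [hclosed.closure_eq] at hcl
    exact hcl
  have hJA : J '' A = Z := by
    refine subset_antisymm subset_closure ?_
    intro z hz
    obtain ⟨x, hx⟩ := hrange z hz
    have hzx : z = J (tw x) := by
      apply WeakDual.toStrongDual.injective
      rw [← hx]
      rfl
    have : tw x ∈ closure A := by
      rw [(Jmap_inducing (X := X)).closure_eq_preimage_closure_image A]
      rw [Set.mem_preimage, ← hJ, ← hzx]
      exact hz
    rw [hAclosed.closure_eq] at this
    exact ⟨tw x, this, hzx.symm⟩
  exact (Jmap_embedding (X := X)).isCompact_iff.mpr (hJA ▸ hZc)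

end Aux

/-- If `X` is SWCG (witnessed by `G`) and every countable subset of `K ⊆ L¹(μ,X)` is a
δS-set, then `K` is a δS-set. -/
theorem isDeltaSSet_of_countable_subsets (μ : Measure Ω) [IsProbabilityMeasure μ]
    [CompleteSpace X] (G : Set X) (hG : StronglyGenerates G)
    (K : Set (Lp X 1 μ)) (hK : ∀ K' ⊆ K, K'.Countable → IsDeltaSSet μ K') :
    IsDeltaSSet μ K := by
  constructor
  · constructor
    · -- uniform norm bound
      by_contra hc
      push_neg at hc
      choose f hfK hf using fun n : ℕ => hc n
      obtain ⟨⟨⟨C, hC⟩, -⟩, -⟩ :=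
        hK (Set.range f) (Set.range_subset_iff.mpr hfK) (Set.countable_range f)
      obtain ⟨n, hn⟩ := exists_nat_gt C
      exact absurd (hC (f n) (Set.mem_range_self n)) (not_le.mpr (lt_trans hn (hf n)))
    · -- uniform integrability
      intro ε hε
      by_contra hc
      push_neg at hc
      choose f hfK A hA hint using fun n : ℕ => hc (1 / (n + 1)) (by positivity)
      obtain ⟨⟨-, h2⟩, -⟩ :=
        hK (Set.range f) (Set.range_subset_iff.mpr hfK) (Set.countable_range f)
      obtain ⟨η, hη, hη2⟩ := h2 ε hε
      obtain ⟨n, hn⟩ := exists_nat_one_div_lt hη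
      have := hη2 (f n) (Set.mem_range_self n) (A n)
        (le_trans (hA n) (ENNReal.ofReal_le_ofReal hn.le))
      exact absurd this (not_le.mpr (hint n))
  · intro δ hδ
    -- nonemptiness of G
    have hGne : G.Nonempty := by
      obtain ⟨n0, hn0⟩ := hG.2 {0} (by
        unfold IsWeaklyCompact
        rw [Set.image_singleton]
        exact isCompact_singleton) 1 one_pos
      obtain ⟨a, ha, b, -, -⟩ := hn0 rfl
      obtain ⟨g0, hg0, -⟩ := ha
      exact ⟨g0, hg0⟩
    -- choice of n for each m, uniform over K
    have key : ∀ m : ℕ, ∃ nn : ℕ, ∀ f ∈ K,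
        1 - ENNReal.ofReal (δ * (1 / 2) ^ (m + 1)) ≤
        μ ((f : Ω → X) ⁻¹' ((nn : ℝ) • G + Metric.closedBall (0 : X) (1 / (m + 1)))) := by
      intro m
      by_contra hc
      push_neg at hc
      choose f hfK hf using hc
      obtain ⟨-, h3⟩ := hK (Set.range f) (Set.range_subset_iff.mpr hfK) (Set.countable_range f)
      obtain ⟨W, hWc, hW⟩ := h3 (δ * (1 / 2) ^ (m + 1)) (by positivity)
      obtain ⟨nn, hnn⟩ := hG.2 W hWc (1 / (m + 1)) (by positivity)
      have h4 := hW (f nn) (Set.mem_range_self nn)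
      have hmono := measure_mono (μ := μ) (Set.preimage_mono (f := ((f nn : Ω → X))) hnn)
      exact absurd (le_trans h4 hmono) (not_le.mpr (hf nn))
    choose nn hnn using key
    set tw := toWeakSpace ℝ X with htw
    set C : ℕ → Set X := fun m =>
      (nn m : ℝ) • G + Metric.closedBall (0 : X) (1 / (m + 1)) with hC
    set S : ℕ → Set X := fun m => tw ⁻¹' closure (tw '' C m) with hS
    have hCS : ∀ m, C m ⊆ S m := by
      intro m x hx
      show tw x ∈ closure (tw '' C m)
      exact subset_closure ⟨x, hx, rfl⟩
    have hSclosed : ∀ m, IsClosed (S m) := by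
      intro m
      have hcont : Continuous (tw : X → WeakSpace ℝ X) :=
        WeakBilin.continuous_of_continuous_eval _ (fun ℓ => ℓ.continuous)
      exact isClosed_closure.preimage hcont
    have hSne : ∀ m, (S m).Nonempty := by
      intro m
      obtain ⟨g0, hg0⟩ := hGne
      refine ⟨(nn m : ℝ) • g0 + 0, hCS m ⟨(nn m : ℝ) • g0, ?_, 0, ?_, rfl⟩⟩
      · exact Set.smul_mem_smul_set hg0
      · simp only [Metric.mem_closedBall, dist_self]
        positivity
    refine ⟨⋂ m, S m, ?_, ?_⟩
    · -- weak compactness via the Grothendieck-type lemma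
      unfold IsWeaklyCompact
      have himg : tw '' (⋂ m, S m) = ⋂ m, closure (tw '' C m) := by
        rw [Set.image_iInter tw.bijective]
        exact Set.iInter_congr fun m => Set.image_preimage_eq _ tw.surjective
      rw [← htw, himg]
      exact isCompact_iInter_closure hG.1 nn
    · intro f hfK
      obtain ⟨g, hgsm, hfg⟩ := Lp.aestronglyMeasurable f
      have hN : μ {ω | ¬ (f : Ω → X) ω = g ω} = 0 := hfg
      -- measurability of the preimages of the S m under g
      have msble : ∀ m, MeasurableSet (g ⁻¹' S m) := by
        intro m
        have hφ : StronglyMeasurable (fun ω => Metric.infDist (g ω) (S m)) :=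
          (Metric.continuous_infDist_pt (S m)).comp_stronglyMeasurable hgsm
        have : g ⁻¹' S m = (fun ω => Metric.infDist (g ω) (S m)) ⁻¹' {0} := by
          ext ω
          simp only [Set.mem_preimage, Set.mem_singleton_iff]
          exact (hSclosed m).mem_iff_infDist_zero (hSne m)
        rw [this]
        exact hφ.measurable (measurableSet_singleton 0)
      -- lower bound for each m
      have hg_lb : ∀ m, 1 - ENNReal.ofReal (δ * (1 / 2) ^ (m + 1)) ≤ μ (g ⁻¹' S m) := by
        intro m
        refine le_trans (hnn m f hfK) ?_
        have hsub : (f : Ω → X) ⁻¹' C m ⊆ g ⁻¹' S m ∪ {ω | ¬ (f : Ω → X) ω = g ω} := by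
          intro ω hω
          by_cases h : (f : Ω → X) ω = g ω
          · exact Or.inl (by rw [Set.mem_preimage, ← h]; exact hCS m hω)
          · exact Or.inr h
        calc μ ((f : Ω → X) ⁻¹' C m) ≤ μ (g ⁻¹' S m ∪ {ω | ¬ (f : Ω → X) ω = g ω}) :=
              measure_mono hsub
          _ ≤ μ (g ⁻¹' S m) + μ {ω | ¬ (f : Ω → X) ω = g ω} := measure_union_le _ _
          _ = μ (g ⁻¹' S m) := by rw [hN, add_zero]
      -- complements are small
      have hcompl : ∀ m, μ ((g ⁻¹' S m)ᶜ) ≤ ENNReal.ofReal δ * (2⁻¹ : ℝ≥0∞) ^ (m + 1) := by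
        intro m
        have h1 : μ ((g ⁻¹' S m)ᶜ) = 1 - μ (g ⁻¹' S m) := prob_compl_eq_one_sub (msble m)
        have h2 : (1 : ℝ≥0∞) - μ (g ⁻¹' S m) ≤
            1 - (1 - ENNReal.ofReal (δ * (1 / 2) ^ (m + 1))) :=
          tsub_le_tsub_left (hg_lb m) 1
        have h3 : (1 : ℝ≥0∞) - (1 - ENNReal.ofReal (δ * (1 / 2) ^ (m + 1))) ≤
            ENNReal.ofReal (δ * (1 / 2) ^ (m + 1)) := by
          rw [tsub_le_iff_right]
          exact le_add_tsub
        have h4 : ENNReal.ofReal (δ * (1 / 2) ^ (m + 1)) =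
            ENNReal.ofReal δ * (2⁻¹ : ℝ≥0∞) ^ (m + 1) := by
          rw [ENNReal.ofReal_mul hδ.le]
          congr 1
          rw [ENNReal.ofReal_pow (by norm_num : (0:ℝ) ≤ 1 / 2)]
          congr 1
          rw [ENNReal.ofReal_div_of_pos (by norm_num), ENNReal.ofReal_one,
            ENNReal.ofReal_ofNat, one_div]
        rw [h1, ← h4]
        exact le_trans h2 h3
      -- measure of the intersection
      set E : Set Ω := ⋂ m, g ⁻¹' S m with hE
      have hEmsble : MeasurableSet E := MeasurableSet.iInter msble
      have hEc : μ Eᶜ ≤ ENNReal.ofReal δ := by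
        have h1 : Eᶜ = ⋃ m, (g ⁻¹' S m)ᶜ := by rw [hE, Set.compl_iInter]
        have h2 : μ Eᶜ ≤ ∑' m, μ ((g ⁻¹' S m)ᶜ) := by rw [h1]; exact measure_iUnion_le _
        refine h2.trans ?_
        have hsum : ∑' m : ℕ, (2⁻¹ : ℝ≥0∞) ^ (m + 1) = 1 := by
          have h : ∑' m : ℕ, (2⁻¹ : ℝ≥0∞) ^ (m + 1) =
              (2⁻¹ : ℝ≥0∞) * ∑' m : ℕ, (2⁻¹ : ℝ≥0∞) ^ m := by
            rw [← ENNReal.tsum_mul_left]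
            congr 1
            funext m
            rw [pow_succ, mul_comm]
          rw [h, ENNReal.tsum_geometric, ENNReal.one_sub_inv_two, inv_inv,
            ENNReal.inv_mul_cancel two_ne_zero ENNReal.ofNat_ne_top]
        calc ∑' m, μ ((g ⁻¹' S m)ᶜ)
            ≤ ∑' m : ℕ, ENNReal.ofReal δ * (2⁻¹ : ℝ≥0∞) ^ (m + 1) :=
              ENNReal.tsum_le_tsum hcompl
          _ = ENNReal.ofReal δ * ∑' m : ℕ, (2⁻¹ : ℝ≥0∞) ^ (m + 1) := by
              rw [ENNReal.tsum_mul_left]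
          _ = ENNReal.ofReal δ := by rw [hsum, mul_one]
      have hEmeas : 1 - ENNReal.ofReal δ ≤ μ E := by
        have h1 : μ Eᶜᶜ = 1 - μ Eᶜ := prob_compl_eq_one_sub hEmsble.compl
        rw [compl_compl] at h1
        rw [h1]
        exact tsub_le_tsub_left hEc 1
      -- conclude
      refine le_trans hEmeas ?_
      have hsub : E \ {ω | ¬ (f : Ω → X) ω = g ω} ⊆ (f : Ω → X) ⁻¹' ⋂ m, S m := by
        intro ω ⟨hωE, hωN⟩
        rw [Set.mem_preimage, Set.mem_iInter]
        intro m
        have : (f : Ω → X) ω = g ω := not_not.mp hωN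
        rw [this]
        exact Set.mem_iInter.mp hωE m
      calc μ E ≤ μ (E \ {ω | ¬ (f : Ω → X) ω = g ω}) + μ {ω | ¬ (f : Ω → X) ω = g ω} := by
            refine le_trans (measure_mono ?_) (measure_union_le _ _)
            intro ω hω
            by_cases h : ω ∈ {ω | ¬ (f : Ω → X) ω = g ω}
            · exact Or.inr h
            · exact Or.inl ⟨hω, h⟩
        _ = μ (E \ {ω | ¬ (f : Ω → X) ω = g ω}) := by rw [hN, add_zero]
        _ ≤ μ ((f : Ω → X) ⁻¹' ⋂ m, S m) := measure_mono hsub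
end
end

section
/- Let X be an SWCG Banach space with strongly generating weakly compact set G, which may be taken absolutely convex. Let F: Ω → wk(X) be a multifunction with weakly compact non-empty values such that {ω ∈ Ω : F(ω) ⊆ C} ∈ Σ for every convex closed set C ⊆ X. Then for every δ > 0 there exist A ∈ Σ with μ(A) ≥ 1 − δ and a weakly compact set W ⊆ X such that F(ω) ⊆ W for every ω ∈ A. -/
open MeasureTheory Filter Set ENNReal Pointwise

noncomputable section

variable {Ω : Type*} [MeasurableSpace Ω] {X : Type*} [NormedAddCommGroup X] [NormedSpace ℝ X]

section SWCGAux

open NormedSpace Topology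

/-- The canonical map into the bidual, equipped with the weak-star topology. -/
def jWD (X : Type*) [NormedAddCommGroup X] [NormedSpace ℝ X] :
    X → WeakDual ℝ (StrongDual ℝ X) :=
  fun x => StrongDual.toWeakDual (inclusionInDoubleDual ℝ X x)

lemma jWD_injective : Function.Injective (jWD X) := by
  intro a b h
  have h' : inclusionInDoubleDual ℝ X a = inclusionInDoubleDual ℝ X b :=
    StrongDual.toWeakDual.injective h
  exact (inclusionInDoubleDualLi ℝ (E := X)).injective h'

lemma jWD_norm (x : X) : ‖WeakDual.toStrongDual (jWD X x)‖ = ‖x‖ :=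
  (inclusionInDoubleDualLi ℝ (E := X)).norm_map x

lemma jWD_add (a b : X) : jWD X (a + b) = jWD X a + jWD X b := by
  show StrongDual.toWeakDual (inclusionInDoubleDual ℝ X (a + b)) = _
  rw [(inclusionInDoubleDual ℝ X).map_add]
  exact map_add (StrongDual.toWeakDual : StrongDual ℝ (StrongDual ℝ X) ≃ₗ[ℝ] WeakDual ℝ (StrongDual ℝ X)) _ _

lemma jWD_sub (a b : X) : jWD X (a - b) = jWD X a - jWD X b := by
  show StrongDual.toWeakDual (inclusionInDoubleDual ℝ X (a - b)) = _
  rw [(inclusionInDoubleDual ℝ X).map_sub]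
  exact map_sub (StrongDual.toWeakDual : StrongDual ℝ (StrongDual ℝ X) ≃ₗ[ℝ] WeakDual ℝ (StrongDual ℝ X)) _ _

lemma jWD_contNorm : Continuous (jWD X) :=
  NormedSpace.Dual.toWeakDual_continuous.comp (inclusionInDoubleDual ℝ X).continuous

lemma jWD_contW : Continuous (fun x : WeakSpace ℝ X => jWD X x) := by
  refine WeakBilin.continuous_of_continuous_eval _ fun f => ?_
  exact WeakBilin.eval_continuous ((topDualPairing ℝ X).flip) f

lemma jWD_smul_contW (c : ℝ) : Continuous (fun x : WeakSpace ℝ X => jWD X (c • x)) := by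
  refine WeakBilin.continuous_of_continuous_eval _ fun f => ?_
  have h : (fun a : WeakSpace ℝ X => topDualPairing ℝ (StrongDual ℝ X) (jWD X (c • a)) f)
      = fun a : WeakSpace ℝ X => c • ((topDualPairing ℝ X).flip a f) := by
    funext a
    show f (c • a) = c • f a
    exact map_smul f c a
  rw [h]
  exact (WeakBilin.eval_continuous ((topDualPairing ℝ X).flip) f).const_smul c

lemma jWD_inducing : IsInducing (fun x : WeakSpace ℝ X => jWD X x) := by
  refine IsInducing.of_comp jWD_contW
    (WeakBilin.coeFn_continuous (topDualPairing ℝ (StrongDual ℝ X))) ?_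
  exact ⟨rfl⟩

lemma jWD_isEmbedding : IsEmbedding (fun x : WeakSpace ℝ X => jWD X x) :=
  ⟨jWD_inducing, fun a b h => jWD_injective (X := X) h⟩

lemma norm_bound_of_weaklyCompact {G : Set X} (hG : IsWeaklyCompact G) :
    ∃ r : ℝ, 0 ≤ r ∧ ∀ x ∈ G, ‖x‖ ≤ r := by
  have hpt : ∀ f : StrongDual ℝ X, ∃ C, ∀ i : G, ‖inclusionInDoubleDual ℝ X (i : X) f‖ ≤ C := by
    intro f
    have hc : IsCompact ((fun x : WeakSpace ℝ X => (topDualPairing ℝ X).flip x f) ''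
        (toWeakSpace ℝ X '' G)) :=
      hG.image (WeakBilin.eval_continuous ((topDualPairing ℝ X).flip) f)
    obtain ⟨C, hC⟩ := isBounded_iff_forall_norm_le.mp hc.isBounded
    exact ⟨C, fun i => hC _ ⟨toWeakSpace ℝ X (i : X), ⟨(i : X), i.2, rfl⟩, rfl⟩⟩
  obtain ⟨C', hC'⟩ :=
    banach_steinhaus (g := fun i : G => inclusionInDoubleDual ℝ X (i : X)) hpt
  refine ⟨max C' 0, le_max_right _ _, fun x hx => ?_⟩
  calc ‖x‖ = ‖inclusionInDoubleDual ℝ X x‖ := ((inclusionInDoubleDualLi ℝ (E := X)).norm_map x).symm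
    _ ≤ C' := hC' ⟨x, hx⟩
    _ ≤ max C' 0 := le_max_left _ _

lemma mem_add_ball_iff {G : Set X} (c ε : ℝ) (x : X) :
    jWD X x ∈ (jWD X '' (c • G)) + (WeakDual.toStrongDual ⁻¹' Metric.closedBall 0 ε) ↔
      x ∈ c • G + Metric.closedBall (0 : X) ε := by
  constructor
  · intro hx
    obtain ⟨y₁, hy₁, y₂, hy₂, hsum⟩ := Set.mem_add.mp hx
    obtain ⟨g, hg, rfl⟩ := hy₁
    refine Set.mem_add.mpr ⟨g, hg, x - g, ?_, by abel⟩
    have h2 : y₂ = jWD X (x - g) := by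
      rw [jWD_sub, ← hsum]
      abel
    rw [Set.mem_preimage, Metric.mem_closedBall, dist_zero_right (WeakDual.toStrongDual y₂)] at hy₂
    rw [h2, jWD_norm] at hy₂
    rw [Metric.mem_closedBall, dist_zero_right]
    exact hy₂
  · intro hx
    obtain ⟨g, hg, b, hb, rfl⟩ := Set.mem_add.mp hx
    refine Set.mem_add.mpr ⟨jWD X g, ⟨g, hg, rfl⟩, jWD X b, ?_, (jWD_add g b).symm⟩
    rw [Metric.mem_closedBall, dist_zero_right] at hb
    rw [Set.mem_preimage, Metric.mem_closedBall, dist_zero_right (WeakDual.toStrongDual (jWD X b)), jWD_norm]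
    exact hb

lemma isCompact_jWD_image_smul {G : Set X} (hG : IsWeaklyCompact G) (c : ℝ) :
    IsCompact (jWD X '' (c • G)) := by
  have h : jWD X '' (c • G)
      = (fun x : WeakSpace ℝ X => jWD X (c • x)) '' (toWeakSpace ℝ X '' G) := by
    rw [Set.image_image]
    ext y
    constructor
    · rintro ⟨x, hx, rfl⟩
      obtain ⟨g, hg, rfl⟩ := hx
      exact ⟨g, hg, rfl⟩
    · rintro ⟨g, hg, rfl⟩
      exact ⟨c • g, Set.smul_mem_smul_set hg, rfl⟩
  rw [h]
  exact hG.image (jWD_smul_contW c)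

lemma isClosed_smul_add_ball {G : Set X} (hG : IsWeaklyCompact G) (c ε : ℝ) :
    IsClosed (c • G + Metric.closedBall (0 : X) ε) := by
  have hS : IsCompact ((jWD X '' (c • G)) +
      (WeakDual.toStrongDual ⁻¹' Metric.closedBall 0 ε)) :=
    (isCompact_jWD_image_smul hG c).add (WeakDual.isCompact_closedBall 0 ε)
  have heq : c • G + Metric.closedBall (0 : X) ε
      = jWD X ⁻¹' ((jWD X '' (c • G)) + (WeakDual.toStrongDual ⁻¹' Metric.closedBall 0 ε)) :=
    Set.ext fun x => (mem_add_ball_iff c ε x).symm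
  rw [heq]
  exact hS.isClosed.preimage jWD_contNorm

lemma grothendieck_swcg [CompleteSpace X] {G : Set X} (hG : IsWeaklyCompact G) {W0 : Set X}
    (n : ℕ → ℕ)
    (hW0 : ∀ k : ℕ, W0 ⊆ (n k : ℝ) • G + Metric.closedBall (0 : X) (1 / ((k : ℝ) + 1))) :
    ∃ W : Set X, IsWeaklyCompact W ∧ W0 ⊆ W := by
  obtain ⟨rG, hrG0, hrG⟩ := norm_bound_of_weaklyCompact hG
  have hbdd : ∀ x ∈ W0, ‖x‖ ≤ (n 0 : ℝ) * rG + 1 := by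
    intro x hx
    obtain ⟨y, hy, b, hb, rfl⟩ := Set.mem_add.mp (hW0 0 hx)
    obtain ⟨g, hg, rfl⟩ := hy
    rw [Metric.mem_closedBall, dist_zero_right] at hb
    have hb1 : ‖b‖ ≤ 1 := le_trans hb (by norm_num)
    have hsm : ‖(n 0 : ℝ) • g‖ ≤ (n 0 : ℝ) * rG := by
      rw [norm_smul, Real.norm_natCast]
      exact mul_le_mul_of_nonneg_left (hrG g hg) (Nat.cast_nonneg _)
    calc ‖(n 0 : ℝ) • g + b‖ ≤ ‖(n 0 : ℝ) • g‖ + ‖b‖ := norm_add_le _ _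
      _ ≤ (n 0 : ℝ) * rG + 1 := add_le_add hsm hb1
  set K := closure (jWD X '' W0) with hK
  have hsubball : jWD X '' W0 ⊆
      WeakDual.toStrongDual ⁻¹' Metric.closedBall 0 ((n 0 : ℝ) * rG + 1) := by
    rintro y ⟨x, hx, rfl⟩
    rw [Set.mem_preimage, Metric.mem_closedBall, dist_zero_right (WeakDual.toStrongDual (jWD X x)), jWD_norm]
    exact hbdd x hx
  have hKcomp : IsCompact K :=
    (WeakDual.isCompact_closedBall 0 ((n 0 : ℝ) * rG + 1)).of_isClosed_subset isClosed_closure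
      (closure_minimal hsubball (WeakDual.isClosed_closedBall _ _))
  have hKclosed : ∀ k : ℕ, K ⊆ (jWD X '' ((n k : ℝ) • G)) +
      (WeakDual.toStrongDual ⁻¹' Metric.closedBall 0 (1 / ((k : ℝ) + 1))) := by
    intro k
    refine closure_minimal ?_ ?_
    · rintro y ⟨x, hx, rfl⟩
      exact (mem_add_ball_iff _ _ x).mpr (hW0 k hx)
    · exact ((isCompact_jWD_image_smul hG _).add
        (WeakDual.isCompact_closedBall 0 _)).isClosed
  have hKrange : K ⊆ Set.range (jWD X) := by
    intro y hy
    have hmem : WeakDual.toStrongDual y ∈ closure (Set.range (inclusionInDoubleDual ℝ X)) := by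
      refine (Metric.mem_closure_iff (α := StrongDual ℝ (StrongDual ℝ X))).mpr ?_
      intro ε hε
      obtain ⟨k, hk⟩ := exists_nat_one_div_lt hε
      obtain ⟨y₁, hy₁, y₂, hy₂, hsum⟩ := Set.mem_add.mp (hKclosed k hy)
      obtain ⟨g, hg, rfl⟩ := hy₁
      refine ⟨inclusionInDoubleDual ℝ X g, ⟨g, rfl⟩, ?_⟩
      have h2 : WeakDual.toStrongDual y - inclusionInDoubleDual ℝ X g
          = WeakDual.toStrongDual y₂ := by
        rw [← hsum, map_add]
        have hrfl : WeakDual.toStrongDual (jWD X g) = inclusionInDoubleDual ℝ X g := rfl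
        rw [hrfl]
        abel
      rw [dist_eq_norm (WeakDual.toStrongDual y) (inclusionInDoubleDual ℝ X g), h2]
      rw [Set.mem_preimage, Metric.mem_closedBall, dist_zero_right (WeakDual.toStrongDual y₂)] at hy₂
      exact lt_of_le_of_lt hy₂ hk
    have hclosed : IsClosed (Set.range (inclusionInDoubleDual ℝ X)) :=
      ((inclusionInDoubleDualLi ℝ (E := X)).isometry.isUniformInducing.isComplete_range).isClosed
    rw [hclosed.closure_eq] at hmem
    obtain ⟨x, hx⟩ := hmem
    refine ⟨x, ?_⟩
    have h3 : WeakDual.toStrongDual (jWD X x) = WeakDual.toStrongDual y := hx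
    exact WeakDual.toStrongDual.injective h3
  refine ⟨jWD X ⁻¹' K, ?_, fun x hx => subset_closure ⟨x, hx, rfl⟩⟩
  have himg : toWeakSpace ℝ X '' (jWD X ⁻¹' K)
      = (fun x : WeakSpace ℝ X => jWD X x) ⁻¹' K := by
    ext y
    constructor
    · rintro ⟨x, hx, rfl⟩
      exact hx
    · intro h
      exact ⟨y, h, rfl⟩
  rw [IsWeaklyCompact, himg, jWD_isEmbedding.isCompact_iff,
    Set.image_preimage_eq_of_subset (f := fun x : WeakSpace ℝ X => jWD X x) hKrange]
  exact hKcomp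

theorem exists_weaklyCompact_of_multifunction' (μ : Measure Ω) [IsProbabilityMeasure μ]
    [CompleteSpace X] (G : Set X) (hG : IsWeaklyCompact G ∧ ∀ W : Set X, IsWeaklyCompact W →
      ∀ ε : ℝ, 0 < ε → ∃ n : ℕ, W ⊆ (n : ℝ) • G + Metric.closedBall (0 : X) ε)
    (hGconv : Balanced ℝ G ∧ Convex ℝ G)
    (F : Ω → Set X) (hFwc : ∀ ω, IsWeaklyCompact (F ω)) (hFne : ∀ ω, (F ω).Nonempty)
    (hFmeas : ∀ C : Set X, Convex ℝ C → IsClosed C → MeasurableSet {ω | F ω ⊆ C}) :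
    ∀ δ : ℝ, 0 < δ → ∃ A : Set Ω, MeasurableSet A ∧ 1 - ENNReal.ofReal δ ≤ μ A ∧
      ∃ W : Set X, IsWeaklyCompact W ∧ ∀ ω ∈ A, F ω ⊆ W := by
  intro δ hδ
  classical
  have hΩ : Nonempty Ω := by
    by_contra h
    rw [not_nonempty_iff] at h
    have h1 : μ Set.univ = 1 := measure_univ
    rw [Set.univ_eq_empty_iff.mpr h, measure_empty] at h1
    exact zero_ne_one h1
  obtain ⟨ω0⟩ := hΩ
  have h0G : (0 : X) ∈ G := by
    obtain ⟨n0, hn0⟩ := hG.2 (F ω0) (hFwc ω0) 1 one_pos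
    obtain ⟨x, hx⟩ := hFne ω0
    obtain ⟨y, hy, b, hb, hxe⟩ := Set.mem_add.mp (hn0 hx)
    obtain ⟨g, hg, rfl⟩ := hy
    have hne : G.Nonempty := ⟨g, hg⟩
    have h0 : (0 : X) ∈ (0 : ℝ) • G := by
      rw [Set.zero_smul_set hne]
      simp
    exact hGconv.1 (0 : ℝ) (by norm_num) h0
  have hmono : ∀ {a b : ℕ}, a ≤ b → (a : ℝ) • G ⊆ (b : ℝ) • G := by
    intro a b hab
    rcases Nat.eq_zero_or_pos b with hb | hb
    · have ha : a = 0 := Nat.le_zero.mp (hb ▸ hab)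
      rw [ha, hb]
    · intro x hx
      obtain ⟨g, hg, rfl⟩ := hx
      have hbpos : (0 : ℝ) < b := Nat.cast_pos.mpr hb
      have hg' : ((a : ℝ) / (b : ℝ)) • g ∈ G := by
        refine hGconv.1 ((a : ℝ) / (b : ℝ)) ?_ (Set.smul_mem_smul_set hg)
        rw [Real.norm_eq_abs, abs_of_nonneg (by positivity)]
        rw [div_le_one hbpos]
        exact_mod_cast hab
      refine ⟨((a : ℝ) / (b : ℝ)) • g, hg', ?_⟩
      show (b : ℝ) • (((a : ℝ) / (b : ℝ)) • g) = (a : ℝ) • g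
      rw [smul_smul]
      congr 1
      field_simp
  set Cs : ℕ → ℕ → Set X :=
    fun n k => (n : ℝ) • G + Metric.closedBall (0 : X) (1 / ((k : ℝ) + 1)) with hCs
  have hmeas : ∀ n k, MeasurableSet {ω | F ω ⊆ Cs n k} := fun n k =>
    hFmeas _ ((hGconv.2.smul _).add (convex_closedBall _ _)) (isClosed_smul_add_ball hG.1 _ _)
  have hAmono : ∀ k, Monotone fun n => {ω | F ω ⊆ Cs n k} := by
    intro k a b hab ω hω
    exact fun x hx => Set.add_subset_add (hmono hab) subset_rfl (hω hx)
  have hcover : ∀ k, (⋃ n, {ω | F ω ⊆ Cs n k}) = Set.univ := by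
    intro k
    refine Set.eq_univ_of_forall fun ω => Set.mem_iUnion.mpr ?_
    obtain ⟨m, hm⟩ := hG.2 (F ω) (hFwc ω) (1 / ((k : ℝ) + 1)) (by positivity)
    exact ⟨m, hm⟩
  have htend : ∀ k, Tendsto (fun m => μ {ω | F ω ⊆ Cs m k}) atTop (𝓝 1) := by
    intro k
    have h := tendsto_measure_iUnion_atTop (μ := μ) (hAmono k)
    rw [hcover k, measure_univ] at h
    exact h
  set η : ℕ → ℝ≥0∞ := fun k => ENNReal.ofReal δ * 2⁻¹ ^ (k + 1) with hη
  have hη0 : ∀ k, η k ≠ 0 := fun k =>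
    mul_ne_zero (ne_of_gt (ENNReal.ofReal_pos.mpr hδ))
      (pow_ne_zero _ (by norm_num))
  have hchoice : ∀ k, ∃ m, 1 - η k < μ {ω | F ω ⊆ Cs m k} := by
    intro k
    have hlt : 1 - η k < 1 := ENNReal.sub_lt_self ENNReal.one_ne_top one_ne_zero (hη0 k)
    exact ((htend k).eventually_const_lt hlt).exists
  choose n hn using hchoice
  set A := ⋂ k, {ω | F ω ⊆ Cs (n k) k} with hA
  have hAmeas : MeasurableSet A := MeasurableSet.iInter fun k => hmeas _ _
  have hcompl : ∀ k, μ {ω | F ω ⊆ Cs (n k) k}ᶜ ≤ η k := by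
    intro k
    rw [prob_compl_eq_one_sub (hmeas _ _), tsub_le_iff_left]
    by_cases hcase : η k ≤ 1
    · calc (1 : ℝ≥0∞) = (1 - η k) + η k := (tsub_add_cancel_of_le hcase).symm
        _ ≤ μ {ω | F ω ⊆ Cs (n k) k} + η k := add_le_add_left (hn k).le _
    · push_neg at hcase
      exact le_trans hcase.le le_add_self
  have hsum : ∑' k, η k ≤ ENNReal.ofReal δ := by
    calc ∑' k, η k = ENNReal.ofReal δ * ∑' k : ℕ, (2⁻¹ : ℝ≥0∞) ^ (k + 1) :=
          ENNReal.tsum_mul_left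
      _ = ENNReal.ofReal δ * (2⁻¹ * (1 - 2⁻¹)⁻¹) := by rw [ENNReal.tsum_geometric_add_one]
      _ = ENNReal.ofReal δ * 1 := by
          rw [ENNReal.one_sub_inv_two, inv_inv,
            ENNReal.inv_mul_cancel two_ne_zero ENNReal.ofNat_ne_top]
      _ = ENNReal.ofReal δ := mul_one _
      _ ≤ ENNReal.ofReal δ := le_rfl
  have hμcompl : μ Aᶜ ≤ ENNReal.ofReal δ := by
    rw [hA, Set.compl_iInter]
    exact le_trans (measure_iUnion_le _) (le_trans (ENNReal.tsum_le_tsum hcompl) hsum)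
  have hμA : 1 - ENNReal.ofReal δ ≤ μ A := by
    rw [tsub_le_iff_right]
    calc (1 : ℝ≥0∞) = μ A + μ Aᶜ := by rw [measure_add_measure_compl hAmeas, measure_univ]
      _ ≤ μ A + ENNReal.ofReal δ := add_le_add_right hμcompl _
  obtain ⟨W, hW, hWsub⟩ :=
    grothendieck_swcg hG.1 n (fun k => Set.iInter_subset (fun j => Cs (n j) j) k)
  refine ⟨A, hAmeas, hμA, W, hW, fun ω hω x hx => hWsub ?_⟩
  exact Set.mem_iInter.mpr fun k => (Set.mem_iInter.mp hω k) hx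

end SWCGAux

/-- If `X` is SWCG and `F : Ω → wk(X)` is a multifunction with weakly compact nonempty values
such that `{ω | F ω ⊆ C}` is measurable for every closed convex `C`, then for every `δ > 0`
there are `A ∈ Σ` with `μ A ≥ 1 - δ` and a weakly compact `W` with `F ω ⊆ W` for `ω ∈ A`. -/
theorem exists_weaklyCompact_of_multifunction (μ : Measure Ω) [IsProbabilityMeasure μ]
    [CompleteSpace X] (G : Set X) (hG : StronglyGenerates G)
    (hGconv : Balanced ℝ G ∧ Convex ℝ G)
    (F : Ω → Set X) (hFwc : ∀ ω, IsWeaklyCompact (F ω)) (hFne : ∀ ω, (F ω).Nonempty)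
    (hFmeas : ∀ C : Set X, Convex ℝ C → IsClosed C → MeasurableSet {ω | F ω ⊆ C}) :
    ∀ δ : ℝ, 0 < δ → ∃ A : Set Ω, MeasurableSet A ∧ 1 - ENNReal.ofReal δ ≤ μ A ∧
      ∃ W : Set X, IsWeaklyCompact W ∧ ∀ ω ∈ A, F ω ⊆ W :=
  exists_weaklyCompact_of_multifunction' μ G hG hGconv F hFwc hFne hFmeas
end
end

section
/- Let T be the dyadic tree ⋃_{n∈ℕ} {0,1}ⁿ and E the completion of c₀₀(T) under the norm ‖x‖_E = sup_n ( Σ_{σ∈{0,1}ⁿ} (sup_{τ⪰σ} |x(τ)|)² )^{1/2}. Then for any infinite sequence (σ_k) of pairwise distinct elements of T, the sequence of biorthogonal functionals (e*_{σ_k}) is weak*-null in E* and satisfies ‖e*_{σ_k}‖ = 1 for all k; consequently (e*_{σ_k}) has no norm-convergent subsequence. -/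
open MeasureTheory Filter Set ENNReal

noncomputable section

/-- The dyadic tree `T = ⋃ₙ {0,1}ⁿ`: nonempty finite sequences of `0`s and `1`s. -/
def DyadicTree : Type := {l : List Bool // l ≠ []}

/-- `τ ⪰ σ` iff `τ` extends `σ`. -/
def DyadicTree.Ext (σ τ : DyadicTree) : Prop := σ.1 <+: τ.1

namespace Tal

lemma prefix_unique {l1 l2 l3 : List Bool} (h1 : l1 <+: l3) (h2 : l2 <+: l3)
    (h : l1.length = l2.length) : l1 = l2 :=
  (List.prefix_of_prefix_length_le h1 h2 h.le).eq_of_length h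

noncomputable def g (a : DyadicTree →₀ ℝ) (ρ : DyadicTree) : ℝ :=
  sSup {r : ℝ | ∃ τ : DyadicTree, ρ.Ext τ ∧ r = |a τ|}

noncomputable def M (a : DyadicTree →₀ ℝ) : ℝ := ∑ τ ∈ a.support, |a τ|

def lvl (n : ℕ) : Type := {σ : DyadicTree // σ.1.length = n + 1}

lemma M_nonneg (a : DyadicTree →₀ ℝ) : 0 ≤ M a := Finset.sum_nonneg fun _ _ => abs_nonneg _

lemma abs_le_M (a : DyadicTree →₀ ℝ) (τ : DyadicTree) : |a τ| ≤ M a := by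
  by_cases h : τ ∈ a.support
  · exact Finset.single_le_sum (f := fun τ => |a τ|) (fun _ _ => abs_nonneg _) h
  · simp [Finsupp.notMem_support_iff.mp h, M_nonneg a]

lemma bddAbove' (a : DyadicTree →₀ ℝ) (ρ : DyadicTree) :
    BddAbove {r : ℝ | ∃ τ : DyadicTree, ρ.Ext τ ∧ r = |a τ|} := by
  refine ⟨M a, fun r hr => ?_⟩
  obtain ⟨τ, -, rfl⟩ := hr
  exact abs_le_M a τ

lemma mem_set (a : DyadicTree →₀ ℝ) {ρ τ : DyadicTree} (h : ρ.Ext τ) :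
    |a τ| ∈ {r : ℝ | ∃ τ : DyadicTree, ρ.Ext τ ∧ r = |a τ|} := ⟨τ, h, rfl⟩

lemma abs_le_g (a : DyadicTree →₀ ℝ) {ρ τ : DyadicTree} (h : ρ.Ext τ) : |a τ| ≤ g a ρ :=
  le_csSup (bddAbove' a ρ) (mem_set a h)

lemma g_nonneg (a : DyadicTree →₀ ℝ) (ρ : DyadicTree) : 0 ≤ g a ρ :=
  le_trans (abs_nonneg _) (abs_le_g a (List.prefix_refl ρ.1))

lemma g_le_M (a : DyadicTree →₀ ℝ) (ρ : DyadicTree) : g a ρ ≤ M a := by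
  refine csSup_le ⟨|a ρ|, mem_set a (List.prefix_refl ρ.1)⟩ ?_
  rintro r ⟨τ, -, rfl⟩; exact abs_le_M a τ

lemma g_eq_zero (a : DyadicTree →₀ ℝ) (ρ : DyadicTree)
    (h : ∀ τ ∈ a.support, ¬ ρ.Ext τ) : g a ρ = 0 := by
  refine le_antisymm (csSup_le ⟨|a ρ|, mem_set a (List.prefix_refl ρ.1)⟩ ?_) (g_nonneg a ρ)
  rintro r ⟨τ, hτ, rfl⟩
  have : a τ = 0 := by
    by_contra h'
    exact h τ (Finsupp.mem_support_iff.mpr h') hτ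
  simp [this]

lemma exists_support_ext (a : DyadicTree →₀ ℝ) (ρ : DyadicTree) (h : g a ρ ≠ 0) :
    ∃ τ ∈ a.support, ρ.Ext τ := by
  by_contra h'
  push_neg at h'
  exact h (g_eq_zero a ρ h')

lemma finite_Z (a : DyadicTree →₀ ℝ) (n : ℕ) :
    {ρ : lvl n | g a ρ.1 ≠ 0}.Finite := by
  rw [Set.finite_coe_iff.symm]
  classical
  have : ∀ ρ : {ρ : lvl n | g a ρ.1 ≠ 0}, ∃ τ ∈ a.support, ρ.1.1.Ext τ :=
    fun ρ => exists_support_ext a ρ.1.1 ρ.2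
  choose w hw hext using this
  have hAs : Finite {τ // τ ∈ a.support} := (FinsetCoe.fintype a.support).finite
  refine @Finite.of_injective _ {τ // τ ∈ a.support} hAs (fun ρ => ⟨w ρ, hw ρ⟩) ?_
  intro ρ1 ρ2 h
  have h' : w ρ1 = w ρ2 := congrArg Subtype.val h
  have e1 := hext ρ1
  have e2 := hext ρ2
  rw [h'] at e1
  have : ρ1.1.1.1 = ρ2.1.1.1 := prefix_unique e1 e2 (by rw [ρ1.1.2, ρ2.1.2])
  exact Subtype.ext (Subtype.ext (Subtype.ext this))

lemma summable_sq (a : DyadicTree →₀ ℝ) (n : ℕ) :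
    Summable (fun ρ : lvl n => (g a ρ.1) ^ 2) := by
  classical
  refine summable_of_ne_finset_zero (s := (finite_Z a n).toFinset) ?_
  intro ρ hρ
  have : g a ρ.1 = 0 := by
    by_contra h
    exact hρ ((finite_Z a n).mem_toFinset.mpr h)
  simp [this]

lemma card_Z_le (a : DyadicTree →₀ ℝ) (n : ℕ) :
    (finite_Z a n).toFinset.card ≤ a.support.card := by
  classical
  have : ∀ ρ ∈ (finite_Z a n).toFinset, ∃ τ ∈ a.support, ρ.1.Ext τ := by
    intro ρ hρ
    exact exists_support_ext a ρ.1 ((finite_Z a n).mem_toFinset.mp hρ)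
  choose w hw hext using this
  refine Finset.card_le_card_of_injOn
    (fun ρ => if h : ρ ∈ (finite_Z a n).toFinset then w ρ h else ρ.1) ?_ ?_
  · intro ρ hρ; simp only [Finset.mem_coe] at hρ ⊢; rw [dif_pos hρ]; exact hw ρ hρ
  · intro ρ1 h1 ρ2 h2 h
    simp only [Finset.mem_coe] at h1 h2
    simp only [dif_pos h1, dif_pos h2] at h
    have e1 := hext ρ1 h1
    have e2 := hext ρ2 h2
    rw [h] at e1
    have : ρ1.1.1 = ρ2.1.1 := prefix_unique e1 e2 (by rw [ρ1.2, ρ2.2])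
    exact Subtype.ext (Subtype.ext this)

lemma tsum_sq_le (a : DyadicTree →₀ ℝ) (n : ℕ) :
    (∑' ρ : lvl n, (g a ρ.1) ^ 2) ≤ (a.support.card : ℝ) * (M a) ^ 2 := by
  classical
  rw [tsum_eq_sum (s := (finite_Z a n).toFinset) (by
    intro ρ hρ
    have : g a ρ.1 = 0 := by
      by_contra h; exact hρ ((finite_Z a n).mem_toFinset.mpr h)
    simp [this])]
  calc ∑ ρ ∈ (finite_Z a n).toFinset, (g a ρ.1) ^ 2
      ≤ ∑ _ρ ∈ (finite_Z a n).toFinset, (M a) ^ 2 := by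
        refine Finset.sum_le_sum fun ρ _ => ?_
        exact pow_le_pow_left₀ (g_nonneg a ρ.1) (g_le_M a ρ.1) 2
    _ = ((finite_Z a n).toFinset.card : ℝ) * (M a) ^ 2 := by
        rw [Finset.sum_const, nsmul_eq_mul]
    _ ≤ (a.support.card : ℝ) * (M a) ^ 2 := by
        have := card_Z_le a n
        have h2 : ((finite_Z a n).toFinset.card : ℝ) ≤ (a.support.card : ℝ) := by
          exact_mod_cast this
        exact mul_le_mul_of_nonneg_right h2 (sq_nonneg _)

lemma sq_le_tsum (a : DyadicTree →₀ ℝ) (n : ℕ) (ρ : lvl n) :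
    (g a ρ.1) ^ 2 ≤ (∑' ρ : lvl n, (g a ρ.1) ^ 2) :=
  (summable_sq a n).le_tsum ρ (fun _ _ => sq_nonneg _)

noncomputable def S (a : DyadicTree →₀ ℝ) (n : ℕ) : ℝ :=
  Real.sqrt (∑' ρ : lvl n, (g a ρ.1) ^ 2)

lemma S_bdd (a : DyadicTree →₀ ℝ) : BddAbove (Set.range (S a)) := by
  refine ⟨Real.sqrt ((a.support.card : ℝ) * (M a) ^ 2), ?_⟩
  rintro r ⟨n, rfl⟩
  exact Real.sqrt_le_sqrt (tsum_sq_le a n)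

lemma g_le_S (a : DyadicTree →₀ ℝ) (n : ℕ) (ρ : lvl n) : g a ρ.1 ≤ S a n := by
  have := Real.sqrt_le_sqrt (sq_le_tsum a n ρ)
  rwa [Real.sqrt_sq (g_nonneg a ρ.1)] at this

lemma lvl_len_pos (σ : DyadicTree) : 0 < σ.1.length := List.length_pos_iff.mpr σ.2

section Main
variable {E : Type*} [NormedAddCommGroup E] [NormedSpace ℝ E]
variable (e : DyadicTree → E)
variable (hnorm : ∀ a : DyadicTree →₀ ℝ, ‖∑ σ ∈ a.support, a σ • e σ‖ =
      ⨆ n : ℕ, Real.sqrt (∑' σ : {σ : DyadicTree // σ.1.length = n + 1},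
        (sSup {r : ℝ | ∃ τ : DyadicTree, σ.1.Ext τ ∧ r = |a τ|}) ^ 2))

include hnorm

lemma hnorm' (a : DyadicTree →₀ ℝ) : ‖∑ σ ∈ a.support, a σ • e σ‖ = ⨆ n : ℕ, S a n :=
  hnorm a

lemma coord_bound (a : DyadicTree →₀ ℝ) (σ : DyadicTree) :
    |a σ| ≤ ‖∑ τ ∈ a.support, a τ • e τ‖ := by
  rw [hnorm' e hnorm a]
  obtain ⟨n, hn⟩ : ∃ n, σ.1.length = n + 1 :=
    ⟨σ.1.length - 1, (Nat.succ_pred_eq_of_pos (lvl_len_pos σ)).symm⟩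
  have h1 : |a σ| ≤ S a n := le_trans (abs_le_g a (List.prefix_refl σ.1)) (g_le_S a n ⟨σ, hn⟩)
  exact le_trans h1 (le_ciSup (S_bdd a) n)

lemma norm_e (σ : DyadicTree) : ‖e σ‖ = 1 := by
  classical
  set a : DyadicTree →₀ ℝ := Finsupp.single σ 1 with ha
  have hsupp : a.support = {σ} := Finsupp.support_single_ne_zero σ one_ne_zero
  have hsum : ∑ τ ∈ a.support, a τ • e τ = e σ := by
    rw [hsupp, Finset.sum_singleton, ha, Finsupp.single_eq_same, one_smul]
  have hM : M a = 1 := by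
    rw [M, hsupp, Finset.sum_singleton, ha, Finsupp.single_eq_same]; norm_num
  have hg1 : ∀ ρ : DyadicTree, ρ.Ext σ → g a ρ = 1 := by
    intro ρ h
    refine le_antisymm (le_trans (g_le_M a ρ) hM.le) ?_
    have := abs_le_g a h
    rwa [ha, Finsupp.single_eq_same, abs_one] at this
  have hg0 : ∀ ρ : DyadicTree, ¬ ρ.Ext σ → g a ρ = 0 := by
    intro ρ h
    refine g_eq_zero a ρ ?_
    intro τ hτ
    rw [hsupp, Finset.mem_singleton] at hτ
    subst hτ; exact h
  have hS : ∀ n : ℕ, S a n = if n + 1 ≤ σ.1.length then 1 else 0 := by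
    intro n
    by_cases hle : n + 1 ≤ σ.1.length
    · rw [if_pos hle]
      have htake : (σ.1.take (n+1)).length = n + 1 := by
        rw [List.length_take]; omega
      have htne : σ.1.take (n+1) ≠ [] := by
        intro h; rw [h] at htake; simp at htake
      set ρ₀ : lvl n := ⟨⟨σ.1.take (n+1), htne⟩, htake⟩ with hρ₀
      have hts : (∑' ρ : lvl n, (g a ρ.1) ^ 2) = 1 := by
        rw [tsum_eq_single ρ₀ ?_]
        · rw [hg1 ρ₀.1 (List.take_prefix (n+1) σ.1)]; norm_num
        · intro ρ hρ
          have : ¬ ρ.1.Ext σ := by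
            intro hext
            apply hρ
            have : ρ.1.1 = σ.1.take (n+1) := by
              have := List.prefix_iff_eq_take.mp hext
              rwa [ρ.2] at this
            exact Subtype.ext (Subtype.ext this)
          rw [hg0 ρ.1 this]; norm_num
      rw [S, hts, Real.sqrt_one]
    · rw [if_neg hle]
      have hz : ∀ ρ : lvl n, (g a ρ.1) ^ 2 = 0 := by
        intro ρ
        have : ¬ ρ.1.Ext σ := fun hext => hle (by have := hext.length_le; rw [ρ.2] at this; omega)
        rw [hg0 ρ.1 this]; norm_num
      rw [S, tsum_congr hz, tsum_zero, Real.sqrt_zero]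
  have hkey : ‖e σ‖ = ⨆ n, S a n := by rw [← hsum]; exact hnorm' e hnorm a
  rw [hkey]
  refine le_antisymm (ciSup_le fun n => by rw [hS n]; split <;> norm_num) ?_
  have h0 : S a 0 = 1 := by rw [hS 0]; rw [if_pos (by have := lvl_len_pos σ; omega)]
  rw [← h0]
  exact le_ciSup (S_bdd a) 0

end Main
end Tal

/-- In the Talagrand space ... -/
theorem talagrand_biorthogonal_weakStar_null
    {E : Type*} [NormedAddCommGroup E] [NormedSpace ℝ E] [CompleteSpace E]
    (e : DyadicTree → E)
    -- the norm of a finitely supported combination is given by Talagrand's formula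
    (hnorm : ∀ a : DyadicTree →₀ ℝ, ‖∑ σ ∈ a.support, a σ • e σ‖ =
      ⨆ n : ℕ, Real.sqrt (∑' σ : {σ : DyadicTree // σ.1.length = n + 1},
        (sSup {r : ℝ | ∃ τ : DyadicTree, σ.1.Ext τ ∧ r = |a τ|}) ^ 2))
    -- the span of the basis vectors is dense in `E`
    (hdense : (Submodule.span ℝ (Set.range e)).topologicalClosure = ⊤)
    -- biorthogonal functionals
    (estar : DyadicTree → E →L[ℝ] ℝ)
    (hbi1 : ∀ σ : DyadicTree, estar σ (e σ) = 1)
    (hbi0 : ∀ σ τ : DyadicTree, σ ≠ τ → estar σ (e τ) = 0)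
    (σk : ℕ → DyadicTree) (hinj : Function.Injective σk) :
    (∀ k : ℕ, ‖estar (σk k)‖ = 1) ∧
    (∀ x : E, Tendsto (fun k => estar (σk k) x) atTop (nhds 0)) ∧
    ¬ ∃ (φ : ℕ → ℕ) (g : E →L[ℝ] ℝ), StrictMono φ ∧
        Tendsto (fun k => ‖estar (σk (φ k)) - g‖) atTop (nhds 0) := by
  classical
  -- estar evaluated on a finite combination gives the coordinate
  have hcoord : ∀ (σ : DyadicTree) (a : DyadicTree →₀ ℝ),
      estar σ (∑ τ ∈ a.support, a τ • e τ) = a σ := by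
    intro σ a
    rw [map_sum]
    simp only [_root_.map_smul]
    have : ∀ τ ∈ a.support, a τ • estar σ (e τ) = if τ = σ then a σ else 0 := by
      intro τ hτ
      by_cases h : τ = σ
      · subst h; rw [if_pos rfl, hbi1, smul_eq_mul, mul_one]
      · rw [if_neg h, hbi0 σ τ (Ne.symm h), smul_eq_mul, mul_zero]
    calc ∑ τ ∈ a.support, a τ • estar σ (e τ)
        = ∑ τ ∈ a.support, if τ = σ then a σ else 0 := Finset.sum_congr rfl this
      _ = if σ ∈ a.support then a σ else 0 := Finset.sum_ite_eq' a.support σ (fun _ => a σ)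
      _ = a σ := by
          split
          · rfl
          · exact (Finsupp.notMem_support_iff.mp (by assumption)).symm
  -- estar is bounded by 1 on the dense span, hence everywhere
  have hdense' : closure ((Submodule.span ℝ (Set.range e) : Submodule ℝ E) : Set E) = univ := by
    rw [← Submodule.topologicalClosure_coe, hdense]; rfl
  have hle : ∀ (σ : DyadicTree) (x : E), |estar σ x| ≤ ‖x‖ := by
    intro σ x
    have hC : IsClosed {y : E | |estar σ y| ≤ ‖y‖} :=
      isClosed_le ((estar σ).continuous.abs) continuous_norm
    have hsub : ((Submodule.span ℝ (Set.range e) : Submodule ℝ E) : Set E) ⊆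
        {y : E | |estar σ y| ≤ ‖y‖} := by
      intro y hy
      obtain ⟨a, ha⟩ := Finsupp.mem_span_range_iff_exists_finsupp.mp hy
      have ha' : ∑ τ ∈ a.support, a τ • e τ = y := ha
      have h1 : estar σ y = a σ := by rw [← ha']; exact hcoord σ a
      have h2 := Tal.coord_bound e hnorm a σ
      rw [ha'] at h2
      rw [Set.mem_setOf_eq, h1]
      exact h2
    have : closure ((Submodule.span ℝ (Set.range e) : Submodule ℝ E) : Set E) ⊆
        {y : E | |estar σ y| ≤ ‖y‖} := closure_minimal hsub hC
    rw [hdense'] at this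
    exact this (Set.mem_univ x)
  have hnorm1 : ∀ σ : DyadicTree, ‖estar σ‖ = 1 := by
    intro σ
    refine le_antisymm ((estar σ).opNorm_le_bound zero_le_one fun x => by
      simpa using hle σ x) ?_
    have h1 := (estar σ).le_opNorm (e σ)
    rw [hbi1 σ, Tal.norm_e e hnorm σ, mul_one] at h1
    simpa using h1
  refine ⟨fun k => hnorm1 (σk k), ?_, ?_⟩
  · -- weak* null
    intro x
    rw [NormedAddCommGroup.tendsto_nhds_zero]
    intro ε hε
    have hx : x ∈ closure ((Submodule.span ℝ (Set.range e) : Submodule ℝ E) : Set E) := by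
      rw [hdense']; exact Set.mem_univ x
    obtain ⟨y, hy, hxy⟩ := Metric.mem_closure_iff.mp hx ε hε
    obtain ⟨a, ha⟩ := Finsupp.mem_span_range_iff_exists_finsupp.mp hy
    have ha' : ∑ τ ∈ a.support, a τ • e τ = y := ha
    have hfin : {k : ℕ | σk k ∈ a.support}.Finite :=
      Set.Finite.preimage (Set.injOn_of_injective hinj) (a.support.finite_toSet)
    have hev : ∀ᶠ k in atTop, σk k ∉ a.support := by
      rw [← Nat.cofinite_eq_atTop]
      exact hfin.compl_mem_cofinite
    filter_upwards [hev] with k hk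
    have h0 : estar (σk k) y = 0 := by
      rw [← ha', hcoord]
      exact Finsupp.notMem_support_iff.mp hk
    have : estar (σk k) x = estar (σk k) (x - y) + estar (σk k) y := by
      rw [map_sub]; ring
    rw [Real.norm_eq_abs, this, h0, add_zero]
    calc |estar (σk k) (x - y)| ≤ ‖x - y‖ := hle _ _
      _ < ε := by rwa [← dist_eq_norm]
  · -- no norm-convergent subsequence
    rintro ⟨φ, g, hφ, ht⟩
    obtain ⟨N, hN⟩ := Metric.tendsto_atTop.mp ht (1/2) (by norm_num)
    have d1 : ‖estar (σk (φ N)) - g‖ < 1/2 := by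
      have := hN N le_rfl
      rwa [Real.dist_eq, sub_zero, abs_of_nonneg (norm_nonneg _)] at this
    have d2 : ‖estar (σk (φ (N+1))) - g‖ < 1/2 := by
      have := hN (N+1) (Nat.le_succ N)
      rwa [Real.dist_eq, sub_zero, abs_of_nonneg (norm_nonneg _)] at this
    set A := σk (φ N)
    set B := σk (φ (N+1))
    have hAB : A ≠ B := by
      intro h
      have := hinj h
      exact absurd this (Nat.ne_of_lt (hφ (Nat.lt_succ_self N)))
    have hdiff : ‖estar A - estar B‖ < 1 := by
      calc ‖estar A - estar B‖ = ‖(estar A - g) - (estar B - g)‖ := by rw [sub_sub_sub_cancel_right]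
        _ ≤ ‖estar A - g‖ + ‖estar B - g‖ := norm_sub_le _ _
        _ < 1/2 + 1/2 := add_lt_add d1 d2
        _ = 1 := by norm_num
    have heval : (estar A - estar B) (e A) = 1 := by
      rw [ContinuousLinearMap.sub_apply, hbi1 A, hbi0 B A (Ne.symm hAB), sub_zero]
    have h1 : (1 : ℝ) ≤ ‖estar A - estar B‖ := by
      have := (estar A - estar B).le_opNorm (e A)
      rw [heval, Tal.norm_e e hnorm A, mul_one] at this
      simpa using this
    linarith
end
end

section
/- Let X₀ be the Batt–Hiermeyer space: the space of x: T → ℝ with ‖x‖ = sup { (Σ_{i=1}^n (Σ_{σ∈C_i} |x(σ)|)²)^{1/2} } finite, the supremum over finite families of pairwise disjoint finite chains C_1,…,C_n of the dyadic tree T. If (σ_n) is an infinite antichain of T, then the sequence (e_{σ_n}) in X₀ is equivalent to the standard unit vector basis of ℓ²; in particular (e_{σ_n}) is weakly null. -/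
open MeasureTheory Filter Set ENNReal

noncomputable section

/-- `σ` and `τ` are comparable in the extension order of the dyadic tree. -/
def DyadicTree.Comparable (σ τ : DyadicTree) : Prop := σ.1 <+: τ.1 ∨ τ.1 <+: σ.1

private lemma sq_sum_of_card_le_one {α : Type*} (s : Finset α) (f : α → ℝ)
    (h : s.card ≤ 1) : (∑ x ∈ s, |f x|) ^ 2 = ∑ x ∈ s, (f x) ^ 2 := by
  rcases s.eq_empty_or_nonempty with rfl | hs
  · simp
  · have : s.card = 1 := le_antisymm h (Finset.one_le_card.mpr hs)
    obtain ⟨x, rfl⟩ := Finset.card_eq_one.mp this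
    simp [sq_abs]

/-- In the Batt–Hiermeyer space `X₀` (functions `x : T → ℝ` with
`‖x‖ = sup (Σᵢ (Σ_{σ∈Cᵢ} |x σ|)²)^{1/2}`, the sup over finite families of pairwise disjoint
finite chains), the unit vectors along any infinite antichain are equivalent to the standard
basis of `ℓ²`; in particular they form a weakly null sequence. -/
theorem battHiermeyer_antichain_ell2
    {X₀ : Type*} [NormedAddCommGroup X₀] [NormedSpace ℝ X₀] [CompleteSpace X₀]
    (e : DyadicTree → X₀)
    -- the norm of a finitely supported combination is given by the Batt–Hiermeyer formula
    (hnorm : ∀ a : DyadicTree →₀ ℝ, ‖∑ σ ∈ a.support, a σ • e σ‖ =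
      sSup {r : ℝ | ∃ 𝒞 : Finset (Finset DyadicTree),
        (∀ C ∈ 𝒞, (C : Set DyadicTree).Pairwise DyadicTree.Comparable) ∧
        ((𝒞 : Set (Finset DyadicTree)).Pairwise fun C D => Disjoint C D) ∧
        r = Real.sqrt (∑ C ∈ 𝒞, (∑ σ ∈ C, |a σ|) ^ 2)})
    (σ : ℕ → DyadicTree) (hinj : Function.Injective σ)
    -- `(σ n)` is an antichain: distinct elements are incomparable
    (hanti : ∀ m n : ℕ, m ≠ n → ¬ DyadicTree.Comparable (σ m) (σ n)) :
    (∀ a : ℕ →₀ ℝ, ‖∑ n ∈ a.support, a n • e (σ n)‖ =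
      Real.sqrt (∑ n ∈ a.support, (a n) ^ 2)) ∧
    ∀ g : X₀ →L[ℝ] ℝ, Tendsto (fun n => g (e (σ n))) atTop (nhds 0) := by
  classical
  set emb : ℕ ↪ DyadicTree := ⟨σ, hinj⟩ with hemb
  have key : ∀ a : ℕ →₀ ℝ, ‖∑ n ∈ a.support, a n • e (σ n)‖ =
      Real.sqrt (∑ n ∈ a.support, (a n) ^ 2) := by
    intro a
    set b : DyadicTree →₀ ℝ := a.embDomain emb with hb
    have hbsupp : b.support = a.support.map emb := Finsupp.support_embDomain _ _
    -- antichain property transferred to the support of `b`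
    have hsupp_anti : ∀ τ₁ ∈ b.support, ∀ τ₂ ∈ b.support,
        DyadicTree.Comparable τ₁ τ₂ → τ₁ = τ₂ := by
      intro τ₁ h₁ τ₂ h₂ hcomp
      rw [hbsupp, Finset.mem_map] at h₁ h₂
      obtain ⟨m, _, rfl⟩ := h₁
      obtain ⟨n, _, rfl⟩ := h₂
      by_contra hne
      exact hanti m n (fun h => hne (by rw [h])) hcomp
    have hsum : ∑ n ∈ a.support, a n • e (σ n) = ∑ τ ∈ b.support, b τ • e τ := by
      rw [hbsupp, Finset.sum_map]
      refine Finset.sum_congr rfl fun n hn => ?_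
      rw [Finsupp.embDomain_apply_self]
      rfl
    have hsq : ∑ n ∈ a.support, (a n) ^ 2 = ∑ τ ∈ b.support, (b τ) ^ 2 := by
      rw [hbsupp, Finset.sum_map]
      exact Finset.sum_congr rfl fun n hn => by rw [Finsupp.embDomain_apply_self]
    rw [hsum, hsq, hnorm b]
    set S : Set ℝ := {r : ℝ | ∃ 𝒞 : Finset (Finset DyadicTree),
        (∀ C ∈ 𝒞, (C : Set DyadicTree).Pairwise DyadicTree.Comparable) ∧
        ((𝒞 : Set (Finset DyadicTree)).Pairwise fun C D => Disjoint C D) ∧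
        r = Real.sqrt (∑ C ∈ 𝒞, (∑ σ ∈ C, |b σ|) ^ 2)} with hS
    have hmem : Real.sqrt (∑ τ ∈ b.support, (b τ) ^ 2) ∈ S := by
      refine ⟨b.support.image (fun τ => ({τ} : Finset DyadicTree)), ?_, ?_, ?_⟩
      · intro C hC
        obtain ⟨τ, _, rfl⟩ := Finset.mem_image.mp hC
        simp [Set.Pairwise]
      · intro C hC D hD hne
        obtain ⟨τ₁, _, rfl⟩ := Finset.mem_image.mp hC
        obtain ⟨τ₂, _, rfl⟩ := Finset.mem_image.mp hD
        refine Finset.disjoint_singleton.mpr ?_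
        rintro rfl; exact hne rfl
      · congr 1
        rw [Finset.sum_image (fun x _ y _ h => Finset.singleton_injective h)]
        exact Finset.sum_congr rfl fun τ _ => by simp [sq_abs]
    have hub : ∀ r ∈ S, r ≤ Real.sqrt (∑ τ ∈ b.support, (b τ) ^ 2) := by
      rintro r ⟨𝒞, hchain, hdisj, rfl⟩
      apply Real.sqrt_le_sqrt
      -- each chain meets the support in at most one point
      have hone : ∀ C ∈ 𝒞, (∑ τ ∈ C, |b τ|) ^ 2 = ∑ τ ∈ C ∩ b.support, (b τ) ^ 2 := by
        intro C hC
        have h1 : ∑ τ ∈ C, |b τ| = ∑ τ ∈ C ∩ b.support, |b τ| := by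
          refine (Finset.sum_subset (Finset.inter_subset_left) ?_).symm
          intro τ hτ hτ'
          have : τ ∉ b.support := fun h => hτ' (Finset.mem_inter.mpr ⟨hτ, h⟩)
          simp [Finsupp.notMem_support_iff.mp this]
        have hcard : (C ∩ b.support).card ≤ 1 := by
          refine Finset.card_le_one.mpr fun τ₁ h₁ τ₂ h₂ => ?_
          obtain ⟨hC₁, hs₁⟩ := Finset.mem_inter.mp h₁
          obtain ⟨hC₂, hs₂⟩ := Finset.mem_inter.mp h₂
          by_cases hne : τ₁ = τ₂
          · exact hne
          · exact hsupp_anti τ₁ hs₁ τ₂ hs₂ (hchain C hC hC₁ hC₂ hne)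
        rw [h1, sq_sum_of_card_le_one _ _ hcard]
      rw [Finset.sum_congr rfl hone]
      have hdisj' : (↑𝒞 : Set (Finset DyadicTree)).PairwiseDisjoint
          (fun C => C ∩ b.support) := by
        intro C hC D hD hne
        exact Finset.disjoint_left.mpr fun τ hτ hτ' =>
          (Finset.disjoint_left.mp (hdisj hC hD hne))
            (Finset.mem_inter.mp hτ).1 (Finset.mem_inter.mp hτ').1
      rw [← Finset.sum_biUnion hdisj']
      refine Finset.sum_le_sum_of_subset_of_nonneg ?_ (fun τ _ _ => sq_nonneg _)
      intro τ hτ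
      obtain ⟨C, _, hτC⟩ := Finset.mem_biUnion.mp hτ
      exact (Finset.mem_inter.mp hτC).2
    exact le_antisymm (csSup_le ⟨_, hmem⟩ hub)
      (le_csSup ⟨_, hub⟩ hmem)
  refine ⟨key, fun g => ?_⟩
  -- Bessel-type inequality: partial sums of squares are bounded by ‖g‖²
  have hbdd : ∀ s : Finset ℕ, ∑ n ∈ s, (g (e (σ n))) ^ 2 ≤ ‖g‖ ^ 2 := by
    intro s
    set a : ℕ →₀ ℝ := Finsupp.indicator s (fun n _ => g (e (σ n))) with ha
    set Q : ℝ := ∑ n ∈ s, (g (e (σ n))) ^ 2 with hQ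
    have hQ0 : 0 ≤ Q := Finset.sum_nonneg fun _ _ => sq_nonneg _
    have hsum : ∑ n ∈ a.support, a n • e (σ n) = ∑ n ∈ s, a n • e (σ n) := by
      refine Finset.sum_subset (Finsupp.support_indicator_subset _ _) ?_
      intro n _ hn
      simp [Finsupp.notMem_support_iff.mp hn]
    have hgQ : g (∑ n ∈ a.support, a n • e (σ n)) = Q := by
      rw [hsum, map_sum]
      refine Finset.sum_congr rfl fun n hn => ?_
      rw [Finsupp.indicator_of_mem hn]
      simp [sq, smul_eq_mul]
    have hle : ∑ n ∈ a.support, (a n) ^ 2 ≤ Q := by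
      rw [hQ]
      have : ∀ n ∈ s, (a n) ^ 2 = (g (e (σ n))) ^ 2 := fun n hn => by
        rw [Finsupp.indicator_of_mem hn]
      rw [← Finset.sum_congr rfl this]
      exact Finset.sum_le_sum_of_subset_of_nonneg
        (Finsupp.support_indicator_subset _ _) (fun _ _ _ => sq_nonneg _)
    have hnormle : Q ≤ ‖g‖ * Real.sqrt Q := by
      calc Q = g (∑ n ∈ a.support, a n • e (σ n)) := hgQ.symm
        _ ≤ |g (∑ n ∈ a.support, a n • e (σ n))| := le_abs_self _
        _ ≤ ‖g‖ * ‖∑ n ∈ a.support, a n • e (σ n)‖ := g.le_opNorm _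
        _ = ‖g‖ * Real.sqrt (∑ n ∈ a.support, (a n) ^ 2) := by rw [key a]
        _ ≤ ‖g‖ * Real.sqrt Q := by
            exact mul_le_mul_of_nonneg_left (Real.sqrt_le_sqrt hle) (norm_nonneg _)
    nlinarith [Real.sq_sqrt hQ0, Real.sqrt_nonneg Q, norm_nonneg g,
      sq_nonneg (‖g‖ - Real.sqrt Q)]
  have hsummable : Summable (fun n => (g (e (σ n))) ^ 2) :=
    summable_of_sum_range_le (fun _ => sq_nonneg _) (fun n => hbdd (Finset.range n))
  have hsq0 : Tendsto (fun n => (g (e (σ n))) ^ 2) atTop (nhds 0) :=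
    hsummable.tendsto_atTop_zero
  rw [tendsto_zero_iff_norm_tendsto_zero]
  have habs : Tendsto (fun n => |g (e (σ n))|) atTop (nhds 0) := by
    have := (Real.continuous_sqrt.tendsto 0).comp hsq0
    simpa [Real.sqrt_sq_eq_abs, Function.comp_def] using this
  simpa [Real.norm_eq_abs] using habs
end
end
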